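/- arXiv:1705.05346 — 3 statements merged into one kernel-verified Lean document; each statement's English description precedes it below -/
import Mathlib

section
/- Let N and k be positive integers with 2 < k < N. Then there exists a C² function u : ℝ^N → ℝ such that u(x) ≥ 0 for every x, u is not constant, and P⁺_k(D²u(x)) ≤ 0 for every x ∈ ℝ^N. Explicitly, one may take u(x) = (1/8)(k(k−2)|x|⁴ − 2(k²−4)|x|² + k(k+2)) for |x| ≤ 1 and u(x) = |x|^{2−k} for |x| > 1. -/
open scoped BigOperators

/-- The eigenvalues of a symmetric real matrix, listed in nondecreasing order with
multiplicity (junk value `0` if the matrix is not Hermitian). -/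
noncomputable def sortedEig {n : ℕ} (A : Matrix (Fin n) (Fin n) ℝ) : Fin n → ℝ :=
  if h : A.IsHermitian then h.eigenvalues ∘ Tuple.sort h.eigenvalues else 0

/-- `P⁻_k(A)`: the sum of the `k` smallest eigenvalues of `A`. -/
noncomputable def Pminus {n : ℕ} (k : ℕ) (A : Matrix (Fin n) (Fin n) ℝ) : ℝ :=
  ∑ i : Fin n, if (i : ℕ) < k then sortedEig A i else 0

/-- `P⁺_k(A)`: the sum of the `k` largest eigenvalues of `A`. -/
noncomputable def Pplus {n : ℕ} (k : ℕ) (A : Matrix (Fin n) (Fin n) ℝ) : ℝ :=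
  ∑ i : Fin n, if n - k ≤ (i : ℕ) then sortedEig A i else 0

/-- The Hessian matrix `D²u(x)` of `u : ℝ^N → ℝ` at `x`. -/
noncomputable def hessianMatrix {N : ℕ} (u : EuclideanSpace ℝ (Fin N) → ℝ)
    (x : EuclideanSpace ℝ (Fin N)) : Matrix (Fin N) (Fin N) ℝ :=
  fun i j => iteratedFDeriv ℝ 2 u x ![EuclideanSpace.single i 1, EuclideanSpace.single j 1]

/-- `u` is a viscosity supersolution of `F(D²u) + g(u) = 0` in `Ω`. -/
def IsViscositySupersolution {N : ℕ} (F : Matrix (Fin N) (Fin N) ℝ → ℝ) (g : ℝ → ℝ)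
    (Ω : Set (EuclideanSpace ℝ (Fin N))) (u : EuclideanSpace ℝ (Fin N) → ℝ) : Prop :=
  ∀ x₀ ∈ Ω, ∀ φ : EuclideanSpace ℝ (Fin N) → ℝ, ContDiff ℝ 2 φ →
    IsLocalMinOn (fun x => u x - φ x) Ω x₀ →
      F (hessianMatrix φ x₀) + g (u x₀) ≤ 0

/-- `u` is a viscosity subsolution of `F(D²u) + g(u) = 0` in `Ω`. -/
def IsViscositySubsolution {N : ℕ} (F : Matrix (Fin N) (Fin N) ℝ → ℝ) (g : ℝ → ℝ)
    (Ω : Set (EuclideanSpace ℝ (Fin N))) (u : EuclideanSpace ℝ (Fin N) → ℝ) : Prop :=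
  ∀ x₀ ∈ Ω, ∀ φ : EuclideanSpace ℝ (Fin N) → ℝ, ContDiff ℝ 2 φ →
    IsLocalMaxOn (fun x => u x - φ x) Ω x₀ →
      0 ≤ F (hessianMatrix φ x₀) + g (u x₀)

/-- `u` is a viscosity solution of `F(D²u) + g(u) = 0` in `Ω`. -/
def IsViscositySolution {N : ℕ} (F : Matrix (Fin N) (Fin N) ℝ → ℝ) (g : ℝ → ℝ)
    (Ω : Set (EuclideanSpace ℝ (Fin N))) (u : EuclideanSpace ℝ (Fin N) → ℝ) : Prop :=
  IsViscositySubsolution F g Ω u ∧ IsViscositySupersolution F g Ω u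


open Real
open scoped Matrix


lemma hasDerivAt_ite_glue {f₁ f₂ : ℝ → ℝ} {a s c : ℝ}
    (h1 : s ≤ a → HasDerivAt f₁ c s) (h2 : a ≤ s → HasDerivAt f₂ c s)
    (heq : f₁ a = f₂ a) :
    HasDerivAt (fun t => if t ≤ a then f₁ t else f₂ t) c s := by
  rcases lt_trichotomy s a with h | h | h
  · apply (h1 h.le).congr_of_eventuallyEq
    filter_upwards [Iio_mem_nhds h] with t ht
    rw [if_pos (le_of_lt (Set.mem_Iio.1 ht))]
  · subst h
    have H1 : HasDerivWithinAt (fun t => if t ≤ s then f₁ t else f₂ t) c (Set.Iic s) s := by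
      apply ((h1 le_rfl).hasDerivWithinAt).congr
      · intro t ht; rw [if_pos (Set.mem_Iic.1 ht)]
      · rw [if_pos le_rfl]
    have H2 : HasDerivWithinAt (fun t => if t ≤ s then f₁ t else f₂ t) c (Set.Ici s) s := by
      apply ((h2 le_rfl).hasDerivWithinAt).congr
      · intro t ht
        rcases eq_or_lt_of_le (Set.mem_Ici.1 ht) with h' | h'
        · rw [← h', if_pos le_rfl, heq]
        · rw [if_neg (not_le.2 h')]
      · rw [if_pos le_rfl, heq]
    have H := H1.union H2
    rw [Set.Iic_union_Ici] at H
    exact hasDerivWithinAt_univ.1 H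
  · apply (h2 h.le).congr_of_eventuallyEq
    filter_upwards [Ioi_mem_nhds h] with t ht
    rw [if_neg (not_le.2 (Set.mem_Ioi.1 ht))]

lemma continuous_ite_glue {f₁ f₂ : ℝ → ℝ} {a : ℝ}
    (h1 : ∀ s ≤ a, ContinuousAt f₁ s) (h2 : ∀ s, a ≤ s → ContinuousAt f₂ s)
    (heq : f₁ a = f₂ a) :
    Continuous (fun t => if t ≤ a then f₁ t else f₂ t) := by
  rw [continuous_iff_continuousAt]
  intro s
  rcases lt_trichotomy s a with h | h | h
  · apply (h1 s h.le).congr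
    filter_upwards [Iio_mem_nhds h] with t ht
    rw [if_pos (le_of_lt (Set.mem_Iio.1 ht))]
  · subst h
    rw [← continuousWithinAt_univ, ← Set.Iic_union_Ici (a := s)]
    apply ContinuousWithinAt.union
    · apply ((h1 s le_rfl).continuousWithinAt).congr
      · intro t ht; rw [if_pos (Set.mem_Iic.1 ht)]
      · rw [if_pos le_rfl]
    · apply ((h2 s le_rfl).continuousWithinAt).congr
      · intro t ht
        rcases eq_or_lt_of_le (Set.mem_Ici.1 ht) with h' | h'
        · rw [← h', if_pos le_rfl, heq]
        · rw [if_neg (not_le.2 h')]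
      · rw [if_pos le_rfl, heq]
  · apply (h2 s h.le).congr
    filter_upwards [Ioi_mem_nhds h] with t ht
    rw [if_neg (not_le.2 (Set.mem_Ioi.1 ht))]

noncomputable def ek (k : ℕ) : ℝ := ((2 : ℝ) - (k : ℝ)) / 2
noncomputable def gP (k : ℕ) (s : ℝ) : ℝ :=
  (1 / 8) * ((k : ℝ) * ((k : ℝ) - 2) * s ^ 2 - 2 * ((k : ℝ) ^ 2 - 4) * s + (k : ℝ) * ((k : ℝ) + 2))
noncomputable def gfun (k : ℕ) (s : ℝ) : ℝ := if s ≤ 1 then gP k s else s ^ (ek k)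
noncomputable def g1 (k : ℕ) (s : ℝ) : ℝ :=
  if s ≤ 1 then (1 / 4) * ((k : ℝ) * ((k : ℝ) - 2) * s - ((k : ℝ) ^ 2 - 4))
  else ek k * s ^ (ek k - 1)
noncomputable def g2 (k : ℕ) (s : ℝ) : ℝ :=
  if s ≤ 1 then (k : ℝ) * ((k : ℝ) - 2) / 4
  else ((k : ℝ) * ((k : ℝ) - 2) / 4) * s ^ (ek k - 2)

lemma hasDerivAt_gP (k : ℕ) (s : ℝ) :
    HasDerivAt (gP k) ((1 / 4) * ((k : ℝ) * ((k : ℝ) - 2) * s - ((k : ℝ) ^ 2 - 4))) s := by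
  have h := ((((hasDerivAt_pow 2 s).const_mul ((k : ℝ) * ((k : ℝ) - 2))).sub
    ((hasDerivAt_id s).const_mul (2 * ((k : ℝ) ^ 2 - 4)))).add_const
    ((k : ℝ) * ((k : ℝ) + 2))).const_mul (1 / 8 : ℝ)
  refine HasDerivAt.congr_deriv (f := gP k) h ?_
  push_cast
  ring

lemma hasDerivAt_gfun {k : ℕ} (hk : 2 < k) (s : ℝ) : HasDerivAt (gfun k) (g1 k s) s := by
  have hk3 : (3 : ℝ) ≤ (k : ℝ) := by exact_mod_cast hk
  unfold gfun g1
  apply hasDerivAt_ite_glue (a := 1)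
  · intro hs
    rw [if_pos hs]
    exact hasDerivAt_gP k s
  · intro hs
    have hs0 : s ≠ 0 := by nlinarith
    have h := Real.hasDerivAt_rpow_const (x := s) (p := ek k) (Or.inl hs0)
    convert h using 1
    by_cases h1 : s ≤ 1
    · have : s = 1 := le_antisymm h1 hs
      subst this
      rw [if_pos le_rfl, Real.one_rpow]
      unfold ek; ring
    · rw [if_neg h1]
  · simp only [Real.one_rpow]
    unfold gP; ring

lemma hasDerivAt_g1 {k : ℕ} (hk : 2 < k) (s : ℝ) : HasDerivAt (g1 k) (g2 k s) s := by
  have hk3 : (3 : ℝ) ≤ (k : ℝ) := by exact_mod_cast hk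
  unfold g1 g2
  apply hasDerivAt_ite_glue (a := 1)
  · intro hs
    rw [if_pos hs]
    have h := ((hasDerivAt_id s).const_mul ((k : ℝ) * ((k : ℝ) - 2))).sub_const ((k : ℝ) ^ 2 - 4)
      |>.const_mul (1 / 4 : ℝ)
    refine h.congr_deriv ?_
    ring
  · intro hs
    have hs0 : s ≠ 0 := by nlinarith
    have h := (Real.hasDerivAt_rpow_const (x := s) (p := ek k - 1) (Or.inl hs0)).const_mul (ek k)
    refine h.congr_deriv ?_
    by_cases h1 : s ≤ 1
    · have : s = 1 := le_antisymm h1 hs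
      subst this
      rw [if_pos le_rfl, Real.one_rpow]
      unfold ek; ring
    · rw [if_neg h1, show ek k - 1 - 1 = ek k - 2 by ring]
      unfold ek; ring
  · rw [Real.one_rpow]
    unfold ek; ring

lemma continuous_g2 {k : ℕ} (hk : 2 < k) : Continuous (g2 k) := by
  unfold g2
  apply continuous_ite_glue
  · intro s _; exact continuousAt_const
  · intro s hs
    have hs0 : s ≠ 0 := by nlinarith [show (0:ℝ) < 1 by norm_num]
    exact (continuousAt_const.mul (Real.continuousAt_rpow_const s _ (Or.inl hs0)))
  · rw [Real.one_rpow]; ring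

lemma contDiff_gfun {k : ℕ} (hk : 2 < k) : ContDiff ℝ 2 (gfun k) := by
  have hd1 : deriv (gfun k) = g1 k := funext fun s => (hasDerivAt_gfun hk s).deriv
  have hd2 : deriv (g1 k) = g2 k := funext fun s => (hasDerivAt_g1 hk s).deriv
  rw [show (2 : WithTop ℕ∞) = 1 + 1 by norm_num, contDiff_succ_iff_deriv]
  refine ⟨fun s => (hasDerivAt_gfun hk s).differentiableAt, by simp, ?_⟩
  rw [hd1, contDiff_one_iff_deriv, hd2]
  exact ⟨fun s => (hasDerivAt_g1 hk s).differentiableAt, continuous_g2 hk⟩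

section Hess
variable {N : ℕ}
local notation "E" => EuclideanSpace ℝ (Fin N)

noncomputable def Lmap : E →L[ℝ] (E →L[ℝ] ℝ) := (2 : ℝ) • (innerSL ℝ : E →L[ℝ] E →L[ℝ] ℝ)

lemma Lmap_apply (v w : E) : Lmap v w = 2 * (inner ℝ v w : ℝ) := rfl

lemma hq (x : E) : HasFDerivAt (fun y : E => ‖y‖ ^ 2) (Lmap x) x := by
  have h := (hasStrictFDerivAt_norm_sq x).hasFDerivAt
  refine h.congr_fderiv ?_
  ext v
  rw [Lmap_apply]
  simp [two_smul]
  ring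

variable {k : ℕ}

lemma hF (hk : 2 < k) (x : E) :
    HasFDerivAt (fun y : E => gfun k (‖y‖ ^ 2)) (g1 k (‖x‖ ^ 2) • Lmap x) x :=
  HasDerivAt.comp_hasFDerivAt x (hasDerivAt_gfun hk _) (hq x)

noncomputable def Phi (k : ℕ) (x : E) : E →L[ℝ] (E →L[ℝ] ℝ) :=
  g1 k (‖x‖ ^ 2) • Lmap + ((g2 k (‖x‖ ^ 2)) • (Lmap x)).smulRight (Lmap x)

lemma hPhi (hk : 2 < k) (x : E) :
    HasFDerivAt (fun y : E => g1 k (‖y‖ ^ 2) • Lmap y) (Phi k x) x := by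
  have hc : HasFDerivAt (fun y : E => g1 k (‖y‖ ^ 2)) ((g2 k (‖x‖ ^ 2)) • (Lmap x)) x :=
    HasDerivAt.comp_hasFDerivAt x (hasDerivAt_g1 hk _) (hq x)
  exact hc.smul Lmap.hasFDerivAt

lemma hessian_gfun (hk : 2 < k) (x : E) (i j : Fin N) :
    hessianMatrix (fun y : E => gfun k (‖y‖ ^ 2)) x i j
      = 2 * g1 k (‖x‖ ^ 2) * (if i = j then 1 else 0)
        + 4 * g2 k (‖x‖ ^ 2) * (x i * x j) := by
  have hfd : fderiv ℝ (fun y : E => gfun k (‖y‖ ^ 2)) = fun y => g1 k (‖y‖ ^ 2) • Lmap y :=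
    funext fun y => (hF hk y).fderiv
  unfold hessianMatrix
  rw [iteratedFDeriv_two_apply, hfd]
  rw [(hPhi hk x).fderiv]
  simp only [Matrix.cons_val_zero, Matrix.cons_val_one, Matrix.head_cons]
  simp only [Phi, ContinuousLinearMap.add_apply, ContinuousLinearMap.smul_apply,
    ContinuousLinearMap.smulRight_apply, smul_eq_mul, Lmap_apply]
  rw [EuclideanSpace.inner_single_left, EuclideanSpace.inner_single_right,
    EuclideanSpace.inner_single_right]
  simp [EuclideanSpace.single_apply, real_inner_comm]
  split <;> ring

end Hess


noncomputable def Mform {n : ℕ} (a b : ℝ) (v : Fin n → ℝ) : Matrix (Fin n) (Fin n) ℝ :=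
  Matrix.of fun i j => a * (if i = j then 1 else 0) + b * (v i * v j)

lemma Mform_isHermitian {n : ℕ} (a b : ℝ) (v : Fin n → ℝ) : (Mform a b v).IsHermitian := by
  unfold Matrix.IsHermitian
  ext i j
  simp only [Mform, Matrix.conjTranspose_apply, Matrix.of_apply, star_trivial]
  by_cases h : j = i
  · subst h; ring
  · rw [if_neg h, if_neg fun hh => h hh.symm]; ring

lemma Mform_mulVec {n : ℕ} (a b : ℝ) (v y : Fin n → ℝ) :
    Mform a b v *ᵥ y = fun i => a * y i + b * (v ⬝ᵥ y) * v i := by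
  funext i
  simp only [Mform, Matrix.mulVec, dotProduct, Matrix.of_apply, add_mul,
    Finset.sum_add_distrib, ite_mul, one_mul, zero_mul, mul_ite, mul_zero, mul_one]
  rw [Finset.sum_ite_eq]
  simp only [Finset.mem_univ, if_pos]
  congr 1
  rw [Finset.mul_sum, Finset.sum_mul]
  apply Finset.sum_congr rfl
  intro j _
  ring

lemma Mform_quad {n : ℕ} (a b : ℝ) (v y : Fin n → ℝ) :
    y ⬝ᵥ (Mform a b v *ᵥ y) = a * (y ⬝ᵥ y) + b * (v ⬝ᵥ y) ^ 2 := by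
  have h1 : ∀ c : ℝ, ∑ i, y i * (a * y i + c * v i)
      = a * (∑ i, y i * y i) + c * (∑ i, v i * y i) := by
    intro c
    rw [Finset.mul_sum, Finset.mul_sum, ← Finset.sum_add_distrib]
    exact Finset.sum_congr rfl fun j _ => by ring
  rw [Mform_mulVec]
  unfold dotProduct
  rw [h1 (b * ∑ j, v j * y j), pow_two]
  ring

lemma Mform_trace {n : ℕ} (a b : ℝ) (v : Fin n → ℝ) :
    (Mform a b v).trace = n * a + b * (v ⬝ᵥ v) := by
  unfold Matrix.trace Matrix.diag dotProduct
  simp only [Mform, Matrix.of_apply, if_pos, mul_one, Finset.sum_add_distrib,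
    Finset.sum_const, Finset.card_univ, Fintype.card_fin, nsmul_eq_mul, Finset.mul_sum]

lemma eig_ge {n : ℕ} (A : Matrix (Fin n) (Fin n) ℝ) (hA : A.IsHermitian) (α : ℝ)
    (h : ∀ y : Fin n → ℝ, α * (y ⬝ᵥ y) ≤ y ⬝ᵥ (A *ᵥ y)) (i : Fin n) :
    α ≤ hA.eigenvalues i := by
  have hv := hA.eigenvalues_eq i
  set v : Fin n → ℝ := (WithLp.equiv 2 _) (hA.eigenvectorBasis i) with hvdef
  have hnorm : v ⬝ᵥ v = 1 := by
    have h1 : (inner ℝ (hA.eigenvectorBasis i) (hA.eigenvectorBasis i) : ℝ)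
        = ‖hA.eigenvectorBasis i‖ ^ 2 := real_inner_self_eq_norm_sq _
    have h2 : ‖hA.eigenvectorBasis i‖ = 1 := hA.eigenvectorBasis.orthonormal.1 i
    rw [h2] at h1
    rw [PiLp.inner_apply] at h1
    simpa [dotProduct, hvdef, pow_two] using h1
  have hre : hA.eigenvalues i = v ⬝ᵥ (A *ᵥ v) := by
    simpa [star_trivial, hvdef] using hv
  calc α = α * (v ⬝ᵥ v) := by rw [hnorm, mul_one]
    _ ≤ v ⬝ᵥ (A *ᵥ v) := h v
    _ = hA.eigenvalues i := hre.symm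

lemma trace_eq_sum_eig {n : ℕ} (A : Matrix (Fin n) (Fin n) ℝ) (hA : A.IsHermitian) :
    A.trace = ∑ i, hA.eigenvalues i := by
  simpa using hA.trace_eq_sum_eigenvalues

lemma Pplus_le {n k : ℕ} (hk0 : 0 < k) (hkn : k ≤ n) (A : Matrix (Fin n) (Fin n) ℝ)
    (hA : A.IsHermitian) (α : ℝ) (hα : ∀ i, α ≤ hA.eigenvalues i) :
    Pplus k A ≤ A.trace - (n - k : ℕ) * α := by
  unfold Pplus sortedEig
  rw [dif_pos hA]
  set σ := Tuple.sort hA.eigenvalues with hσ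
  set f := hA.eigenvalues with hf
  have hsum : ∑ i, f (σ i) = A.trace := (Equiv.sum_comp σ f).trans (trace_eq_sum_eig A hA).symm
  have hsplit : ∑ i : Fin n, (if n - k ≤ (i : ℕ) then f (σ i) else 0)
      = (∑ i, f (σ i)) - ∑ i : Fin n, (if (i : ℕ) < n - k then f (σ i) else 0) := by
    rw [eq_sub_iff_add_eq, ← Finset.sum_add_distrib]
    apply Finset.sum_congr rfl
    intro i _
    by_cases h : n - k ≤ (i : ℕ)
    · rw [if_pos h, if_neg (not_lt.2 h), add_zero]
    · rw [if_neg h, if_pos (not_le.1 h), zero_add]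
  have hcount : ∑ i : Fin n, (if (i : ℕ) < n - k then α else 0) = (n - k : ℕ) * α := by
    rw [Finset.sum_ite, Finset.sum_const, Finset.sum_const_zero, add_zero]
    have hcard : (Finset.univ.filter fun i : Fin n => (i : ℕ) < n - k).card = n - k := by
      have hlt : n - k < n := by omega
      have : (Finset.univ.filter fun i : Fin n => (i : ℕ) < n - k)
          = Finset.Iio (⟨n - k, hlt⟩ : Fin n) := by
        ext j
        simp [Fin.lt_def]
      rw [this, Fin.card_Iio]
    rw [hcard, nsmul_eq_mul]
  have hlb : ∑ i : Fin n, (if (i : ℕ) < n - k then α else 0)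
      ≤ ∑ i : Fin n, (if (i : ℕ) < n - k then f (σ i) else 0) := by
    apply Finset.sum_le_sum
    intro i _
    by_cases h : (i : ℕ) < n - k
    · rw [if_pos h, if_pos h]; exact hα (σ i)
    · rw [if_neg h, if_neg h]
  have : ∑ i : Fin n, (if n - k ≤ (i : ℕ) then (f ∘ σ) i else 0)
      = ∑ i : Fin n, (if n - k ≤ (i : ℕ) then f (σ i) else 0) := rfl
  rw [this, hsplit, hsum]
  linarith [hcount ▸ hlb]


lemma g2_nonneg {k : ℕ} (hk : 2 < k) {s : ℝ} (hs : 0 ≤ s) : 0 ≤ g2 k s := by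
  have hk3 : (3 : ℝ) ≤ (k : ℝ) := by exact_mod_cast hk
  unfold g2
  by_cases h : s ≤ 1
  · rw [if_pos h]; nlinarith
  · rw [if_neg h]
    have h1 : (1 : ℝ) < s := not_le.1 h
    have h2 : (0 : ℝ) ≤ s ^ (ek k - 2) := Real.rpow_nonneg (by linarith) _
    exact mul_nonneg (by nlinarith) h2

lemma key1 {k : ℕ} (hk : 2 < k) {s : ℝ} (hs : 0 ≤ s) :
    2 * (k : ℝ) * g1 k s + 4 * s * g2 k s ≤ 0 := by
  have hk3 : (3 : ℝ) ≤ (k : ℝ) := by exact_mod_cast hk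
  unfold g1 g2
  by_cases h : s ≤ 1
  · rw [if_pos h, if_pos h]
    nlinarith [mul_nonneg (mul_nonneg
      (by nlinarith : (0:ℝ) ≤ (k:ℝ)) (by nlinarith : (0:ℝ) ≤ (k:ℝ)^2 - 4))
      (by linarith : (0:ℝ) ≤ 1 - s)]
  · rw [if_neg h, if_neg h]
    have h1 : (1 : ℝ) < s := not_le.1 h
    have he : s ^ (ek k - 1) = s ^ (ek k - 2) * s := by
      rw [show ek k - 1 = (ek k - 2) + 1 by ring, Real.rpow_add_one (by linarith : s ≠ 0)]
    rw [he]
    have hz : 2 * (k:ℝ) * (ek k * (s ^ (ek k - 2) * s))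
        + 4 * s * (((k:ℝ) * ((k:ℝ) - 2) / 4) * s ^ (ek k - 2)) = 0 := by
      unfold ek; ring
    linarith

lemma gfun_nonneg {k : ℕ} (hk : 2 < k) {s : ℝ} (hs : 0 ≤ s) : 0 ≤ gfun k s := by
  have hk3 : (3 : ℝ) ≤ (k : ℝ) := by exact_mod_cast hk
  unfold gfun gP
  by_cases h : s ≤ 1
  · rw [if_pos h]
    nlinarith [mul_nonneg (mul_nonneg
      (by nlinarith : (0:ℝ) ≤ (k:ℝ) - 2) (by linarith : (0:ℝ) ≤ 1 - s))
      (by nlinarith : (0:ℝ) ≤ (k:ℝ) + 4 - (k:ℝ) * s)]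
  · rw [if_neg h]
    exact Real.rpow_nonneg hs _


theorem statement2 (N k : ℕ) (hk2 : 2 < k) (hkN : k < N) :
    let u : EuclideanSpace ℝ (Fin N) → ℝ := fun x =>
      if ‖x‖ ≤ 1 then
        (1 / 8) * ((k : ℝ) * ((k : ℝ) - 2) * ‖x‖ ^ 4
          - 2 * ((k : ℝ) ^ 2 - 4) * ‖x‖ ^ 2 + (k : ℝ) * ((k : ℝ) + 2))
      else ‖x‖ ^ ((2 : ℝ) - (k : ℝ))
    ContDiff ℝ 2 u ∧ (∀ x, 0 ≤ u x) ∧ ¬ (∃ c : ℝ, ∀ x, u x = c) ∧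
      ∀ x, Pplus k (hessianMatrix u x) ≤ 0 := by
  intro u
  have hk3 : (3 : ℝ) ≤ (k : ℝ) := by exact_mod_cast hk2
  have hueq : u = fun x => gfun k (‖x‖ ^ 2) := by
    funext x
    have hux : u x = if ‖x‖ ≤ 1 then
        (1 / 8) * ((k : ℝ) * ((k : ℝ) - 2) * ‖x‖ ^ 4
          - 2 * ((k : ℝ) ^ 2 - 4) * ‖x‖ ^ 2 + (k : ℝ) * ((k : ℝ) + 2))
      else ‖x‖ ^ ((2 : ℝ) - (k : ℝ)) := rfl
    rw [hux]
    unfold gfun gP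
    have hiff : ‖x‖ ≤ 1 ↔ ‖x‖ ^ 2 ≤ 1 :=
      (pow_le_one_iff_of_nonneg (norm_nonneg x) two_ne_zero).symm
    by_cases h : ‖x‖ ≤ 1
    · rw [if_pos h, if_pos (hiff.1 h)]; ring
    · rw [if_neg h, if_neg (fun hh => h (hiff.2 hh))]
      rw [show ((2 : ℝ) - (k : ℝ)) = 2 * ek k by unfold ek; ring]
      rw [← Real.rpow_natCast ‖x‖ 2, ← Real.rpow_mul (norm_nonneg x)]
      norm_num
  rw [hueq]
  refine ⟨(contDiff_gfun hk2).comp (contDiff_norm_sq ℝ), ?_, ?_, ?_⟩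
  · intro x
    exact gfun_nonneg hk2 (by positivity)
  · rintro ⟨c, hc⟩
    have hN : 0 < N := by omega
    have h0 : gfun k ((0:ℝ) ^ 2) = c := by simpa using hc 0
    have h1 : gfun k ((1:ℝ) ^ 2) = c := by
      simpa [EuclideanSpace.norm_single] using hc (EuclideanSpace.single (⟨0, hN⟩ : Fin N) 1)
    have e0 : gfun k ((0:ℝ) ^ 2) = (k : ℝ) * ((k : ℝ) + 2) / 8 := by
      unfold gfun gP; norm_num; ring
    have e1 : gfun k ((1:ℝ) ^ 2) = 1 := by
      unfold gfun gP; norm_num; ring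
    rw [e0] at h0
    rw [e1] at h1
    rw [← h1] at h0
    nlinarith
  · intro x
    set s : ℝ := ‖x‖ ^ 2 with hsdef
    have hs : 0 ≤ s := by positivity
    have hH : hessianMatrix (fun y : EuclideanSpace ℝ (Fin N) => gfun k (‖y‖ ^ 2)) x
        = Mform (2 * g1 k s) (4 * g2 k s) (fun i => x i) := by
      funext i j
      rw [hessian_gfun hk2]
      rfl
    rw [hH]
    have hherm := Mform_isHermitian (2 * g1 k s) (4 * g2 k s) (fun i => x i)
    have hα : ∀ i, 2 * g1 k s ≤ hherm.eigenvalues i := by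
      apply eig_ge
      intro y
      rw [Mform_quad]
      have h2 : 0 ≤ 4 * g2 k s * ((fun i => x i) ⬝ᵥ y) ^ 2 :=
        mul_nonneg (by nlinarith [g2_nonneg hk2 hs]) (sq_nonneg _)
      linarith
    have hP := Pplus_le (by omega) (le_of_lt hkN) _ hherm _ hα
    have hvv : (fun i => x i) ⬝ᵥ (fun i => x i) = s := by
      rw [hsdef, ← real_inner_self_eq_norm_sq x, PiLp.inner_apply]
      simp [dotProduct, RCLike.inner_apply, pow_two]
    rw [Mform_trace, hvv] at hP
    have hcast : ((N - k : ℕ) : ℝ) = (N : ℝ) - (k : ℝ) := by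
      rw [Nat.cast_sub (le_of_lt hkN)]
    rw [hcast] at hP
    have hkey := key1 hk2 hs
    calc Pplus k (Mform (2 * g1 k s) (4 * g2 k s) (fun i => x i))
        ≤ (N : ℝ) * (2 * g1 k s) + 4 * g2 k s * s - ((N : ℝ) - (k : ℝ)) * (2 * g1 k s) := hP
      _ = 2 * (k : ℝ) * g1 k s + 4 * s * g2 k s := by ring
      _ ≤ 0 := hkey
end

section
/- Let N and k be positive integers with k < N, and let p > 0. Then there exists a continuous nonnegative function u : ℝ^N → ℝ with u not identically 0 which is a viscosity solution of P⁻_k(D²u) + u^p = 0 in ℝ^N. In particular, for 0 < p < 1 and any R > 0, the function u(x) = [ (1−p)/(2k) · (R² − |x|²) ]^{1/(1−p)} for |x| ≤ R and u(x) = 0 for |x| > R is such a viscosity solution. -/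
open scoped BigOperators

open Filter Set Topology

noncomputable section

namespace VH

variable {N : ℕ}

def qform (A : Matrix (Fin N) (Fin N) ℝ) (v : Fin N → ℝ) : ℝ :=
  ∑ i, v i * (A.mulVec v) i

lemma sum_mul_eq_inner (v w : EuclideanSpace ℝ (Fin N)) :
    ∑ i, v i * w i = (inner ℝ v w : ℝ) := by
  simp [PiLp.inner_apply, RCLike.inner_apply, mul_comm]

lemma sum_sq_eq_norm (v : EuclideanSpace ℝ (Fin N)) : ∑ i, v i ^ 2 = ‖v‖ ^ 2 := by
  rw [← real_inner_self_eq_norm_sq, ← sum_mul_eq_inner]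
  simp [sq]

lemma qform_smul_add (A : Matrix (Fin N) (Fin N) ℝ) (a b : ℝ) (x y : Fin N → ℝ) :
    qform A (a • x + b • y)
      = a * a * qform A x + a * b * (∑ i, x i * (A.mulVec y) i)
        + b * a * (∑ i, y i * (A.mulVec x) i) + b * b * qform A y := by
  simp only [qform, Matrix.mulVec_add, Matrix.mulVec_smul]
  simp only [Pi.add_apply, Pi.smul_apply, smul_eq_mul, Finset.mul_sum, ← Finset.sum_add_distrib]
  apply Finset.sum_congr rfl; intro i _; ring

variable {A : Matrix (Fin N) (Fin N) ℝ}

lemma qform_eigen (hA : A.IsHermitian) (i : Fin N) :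
    qform A (hA.eigenvectorBasis i) = hA.eigenvalues i := by
  have hmv : A.mulVec (hA.eigenvectorBasis i)
      = fun l => hA.eigenvalues i * (hA.eigenvectorBasis i) l := by
    have := hA.mulVec_eigenvectorBasis i
    funext l
    exact congrFun this l
  unfold qform
  rw [hmv]
  have h1 : ∑ j, (hA.eigenvectorBasis i) j * (hA.eigenvalues i * (hA.eigenvectorBasis i) j)
      = hA.eigenvalues i * ∑ j, (hA.eigenvectorBasis i) j * (hA.eigenvectorBasis i) j := by
    rw [Finset.mul_sum]; apply Finset.sum_congr rfl; intro j _; ring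
  rw [h1, sum_mul_eq_inner]
  have := hA.eigenvectorBasis.orthonormal.1 i
  rw [real_inner_self_eq_norm_sq, this]
  norm_num

lemma cross_eigen (hA : A.IsHermitian) {i j : Fin N} (hij : i ≠ j) :
    ∑ l, (hA.eigenvectorBasis i) l * (A.mulVec (hA.eigenvectorBasis j)) l = 0 := by
  have hmv : A.mulVec (hA.eigenvectorBasis j)
      = fun l => hA.eigenvalues j * (hA.eigenvectorBasis j) l := by
    have := hA.mulVec_eigenvectorBasis j
    funext l
    exact congrFun this l
  rw [hmv]
  have h1 : ∑ l, (hA.eigenvectorBasis i) l * (hA.eigenvalues j * (hA.eigenvectorBasis j) l)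
      = hA.eigenvalues j * ∑ l, (hA.eigenvectorBasis i) l * (hA.eigenvectorBasis j) l := by
    rw [Finset.mul_sum]; apply Finset.sum_congr rfl; intro l _; ring
  rw [h1, sum_mul_eq_inner, hA.eigenvectorBasis.orthonormal.2 hij, mul_zero]

lemma eig_ge {c : ℝ} (hA : A.IsHermitian)
    (hq : ∀ v : EuclideanSpace ℝ (Fin N), c * ∑ i, v i ^ 2 ≤ qform A v) (i : Fin N) :
    c ≤ hA.eigenvalues i := by
  have h := hq (hA.eigenvectorBasis i)
  rw [qform_eigen hA i, sum_sq_eq_norm, hA.eigenvectorBasis.orthonormal.1 i] at h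
  simpa using h

lemma eig_pair_le {c : ℝ} (hA : A.IsHermitian) {w0 : EuclideanSpace ℝ (Fin N)}
    (hq : ∀ v : EuclideanSpace ℝ (Fin N), (inner ℝ v w0 : ℝ) = 0 → qform A v ≤ c * ∑ i, v i ^ 2)
    {i j : Fin N} (hij : i ≠ j) : hA.eigenvalues i ≤ c ∨ hA.eigenvalues j ≤ c := by
  by_contra hcon
  push_neg at hcon
  obtain ⟨h1, h2⟩ := hcon
  set Wi := hA.eigenvectorBasis i with hWi
  set Wj := hA.eigenvectorBasis j with hWj
  set a : ℝ := inner ℝ Wi w0 with hadef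
  set b : ℝ := inner ℝ Wj w0 with hbdef
  have hnWi : ‖Wi‖ = 1 := hA.eigenvectorBasis.orthonormal.1 i
  have hnWj : ‖Wj‖ = 1 := hA.eigenvectorBasis.orthonormal.1 j
  have hWiWj : (inner ℝ Wi Wj : ℝ) = 0 := hA.eigenvectorBasis.orthonormal.2 hij
  by_cases ha : a = 0
  · have h := hq Wi (by rw [← hadef, ha])
    rw [qform_eigen hA i, sum_sq_eq_norm, hnWi] at h
    simp at h
    linarith
  · set v : EuclideanSpace ℝ (Fin N) := b • Wi + (-a) • Wj with hvdef
    have hv : (inner ℝ v w0 : ℝ) = 0 := by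
      rw [hvdef, inner_add_left, real_inner_smul_left, real_inner_smul_left, ← hadef, ← hbdef]
      ring
    have hqv := hq v hv
    have e1 : qform A v = b * b * hA.eigenvalues i + a * a * hA.eigenvalues j := by
      have h := qform_smul_add A b (-a) Wi Wj
      rw [qform_eigen hA i, qform_eigen hA j, cross_eigen hA hij, cross_eigen hA hij.symm] at h
      have : qform A v = qform A (b • (Wi : Fin N → ℝ) + (-a) • (Wj : Fin N → ℝ)) := rfl
      rw [this, h]; ring
    have e2 : ∑ l, v l ^ 2 = b * b + a * a := by
      rw [sum_sq_eq_norm, hvdef, norm_add_sq_real, real_inner_smul_left, real_inner_smul_right,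
        hWiWj, norm_smul, norm_smul, hnWi, hnWj]
      simp [mul_pow, sq_abs]
      ring
    rw [e1, e2] at hqv
    have haa : 0 < a * a := mul_self_pos.2 ha
    nlinarith [mul_self_nonneg b]

lemma sortedEig_eq (hA : A.IsHermitian) :
    sortedEig A = hA.eigenvalues ∘ Tuple.sort hA.eigenvalues := dif_pos hA

lemma sum_ite_lt (k : ℕ) (hk : k ≤ N) (c : ℝ) :
    ∑ i : Fin N, (if (i : ℕ) < k then c else 0) = (k : ℝ) * c := by
  rw [Finset.sum_ite, Finset.sum_const, Finset.sum_const_zero, add_zero]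
  have hcard : (Finset.univ.filter fun i : Fin N => (i : ℕ) < k).card = k := by
    have : (Finset.univ.filter fun i : Fin N => (i : ℕ) < k)
        = Finset.map (Fin.castLEEmb hk) Finset.univ := by
      ext i
      simp only [Finset.mem_filter, Finset.mem_univ, true_and, Finset.mem_map]
      constructor
      · intro hi
        refine ⟨⟨(i : ℕ), hi⟩, ?_⟩
        ext; simp
      · rintro ⟨a, rfl⟩
        simpa using a.isLt
    rw [this, Finset.card_map, Finset.card_univ, Fintype.card_fin]
  rw [hcard, nsmul_eq_mul]

lemma Pminus_ge {k : ℕ} {c : ℝ} (hA : A.IsHermitian) (hkN : k ≤ N)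
    (hq : ∀ v : EuclideanSpace ℝ (Fin N), c * ∑ i, v i ^ 2 ≤ qform A v) :
    (k : ℝ) * c ≤ Pminus k A := by
  have hge : ∀ i, c ≤ sortedEig A i := by
    intro i
    rw [sortedEig_eq hA]
    exact eig_ge hA hq _
  rw [← sum_ite_lt k hkN c]
  unfold Pminus
  apply Finset.sum_le_sum
  intro i _
  by_cases h : (i : ℕ) < k <;> simp [h, hge i]

lemma Pminus_le {k : ℕ} {c : ℝ} (hA : A.IsHermitian) (hk0 : 0 < k) (hkN : k < N)
    {w0 : EuclideanSpace ℝ (Fin N)}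
    (hq : ∀ v : EuclideanSpace ℝ (Fin N), (inner ℝ v w0 : ℝ) = 0 → qform A v ≤ c * ∑ i, v i ^ 2) :
    Pminus k A ≤ (k : ℝ) * c := by
  set σ := Tuple.sort hA.eigenvalues with hσ
  have hmono : Monotone (hA.eigenvalues ∘ σ) := Tuple.monotone_sort _
  have hsort : ∀ i : Fin N, (i : ℕ) < k → sortedEig A i ≤ c := by
    intro i hi
    by_contra hlt
    push_neg at hlt
    rw [sortedEig_eq hA] at hlt
    have hNpos : 0 < N := lt_trans hk0 hkN
    set last : Fin N := ⟨N - 1, by omega⟩ with hlastdef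
    have hile : i ≤ last := by
      rw [Fin.le_def]
      have := i.isLt
      simp only [hlastdef]
      omega
    have hlastgt : c < hA.eigenvalues (σ last) := lt_of_lt_of_le hlt (hmono hile)
    have hne : σ i ≠ σ last := by
      intro h
      have : i = last := σ.injective h
      have hival : (i : ℕ) = N - 1 := by rw [this]
      omega
    rcases eig_pair_le hA hq hne with h | h
    · exact absurd h (not_le.2 hlt)
    · exact absurd h (not_le.2 hlastgt)
  rw [← sum_ite_lt k hkN.le c]
  unfold Pminus
  apply Finset.sum_le_sum
  intro i _
  by_cases h : (i : ℕ) < k <;> simp [h, hsort i]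

section Hess
variable {φ : EuclideanSpace ℝ (Fin N) → ℝ} {x₀ : EuclideanSpace ℝ (Fin N)}

variable {N : ℕ} {φ : EuclideanSpace ℝ (Fin N) → ℝ} {x₀ : EuclideanSpace ℝ (Fin N)}

lemma euclid_decomp (v : EuclideanSpace ℝ (Fin N)) :
    v = ∑ i, v i • EuclideanSpace.single i (1 : ℝ) := by
  have h := (EuclideanSpace.basisFun (Fin N) ℝ).sum_repr v
  conv_lhs => rw [← h]
  apply Finset.sum_congr rfl
  intro i _
  rw [EuclideanSpace.basisFun_apply, EuclideanSpace.basisFun_repr]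

lemma clm_lin (L : EuclideanSpace ℝ (Fin N) →L[ℝ] ℝ) (v : EuclideanSpace ℝ (Fin N)) :
    L v = ∑ i, v i * L (EuclideanSpace.single i 1) := by
  conv_lhs => rw [euclid_decomp v]
  rw [map_sum]
  apply Finset.sum_congr rfl
  intro i _
  rw [map_smul, smul_eq_mul]

lemma hasFDerivAt_of_contDiff2 (hφ : ContDiff ℝ 2 φ) (y : EuclideanSpace ℝ (Fin N)) :
    HasFDerivAt φ (fderiv ℝ φ y) y :=
  ((hφ.differentiable (by norm_num)) y).hasFDerivAt

lemma fderiv_hasFDerivAt (hφ : ContDiff ℝ 2 φ) (y : EuclideanSpace ℝ (Fin N)) :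
    HasFDerivAt (fderiv ℝ φ) (fderiv ℝ (fderiv ℝ φ) y) y :=
  (((hφ.fderiv_right (m := 1) (by norm_num)).differentiable (by norm_num)) y).hasFDerivAt

lemma hess_entry (i j : Fin N) : hessianMatrix φ x₀ i j
    = fderiv ℝ (fderiv ℝ φ) x₀ (EuclideanSpace.single i 1) (EuclideanSpace.single j 1) := by
  unfold hessianMatrix
  rw [iteratedFDeriv_two_apply]
  simp

lemma hess_herm (hφ : ContDiff ℝ 2 φ) : (hessianMatrix φ x₀).IsHermitian := by
  have hsymm := second_derivative_symmetric (f := φ) (f' := fun y => fderiv ℝ φ y)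
    (fun y => hasFDerivAt_of_contDiff2 hφ y) (fderiv_hasFDerivAt hφ x₀)
  rw [Matrix.IsHermitian]
  ext i j
  rw [Matrix.conjTranspose_apply, hess_entry, hess_entry]
  simp only [RCLike.star_def, starRingEnd_apply, star_trivial]
  exact hsymm _ _

lemma qform_hess (v : EuclideanSpace ℝ (Fin N)) :
    qform (hessianMatrix φ x₀) v = fderiv ℝ (fderiv ℝ φ) x₀ v v := by
  set B := fderiv ℝ (fderiv ℝ φ) x₀ with hB
  unfold qform Matrix.mulVec dotProduct
  have hBv : B v v = ∑ i, v i * (B (EuclideanSpace.single i 1) v) := by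
    have := clm_lin (B.flip v) v
    simpa [ContinuousLinearMap.flip_apply] using this
  rw [hBv]
  apply Finset.sum_congr rfl
  intro i _
  congr 1
  have h2 := clm_lin (B (EuclideanSpace.single i 1)) v
  rw [h2]
  apply Finset.sum_congr rfl
  intro j _
  simp only [hess_entry]
  ring

end Hess

end VH

namespace VH2

lemma soc_min {g g' : ℝ → ℝ} {a : ℝ}
    (hg : ∀ᶠ t in 𝓝 (0:ℝ), HasDerivAt g (g' t) t)
    (hg' : HasDerivAt g' a 0)
    (hmin : IsLocalMin g 0) : 0 ≤ a := by
  by_contra hneg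
  push_neg at hneg
  have h0 : g' 0 = 0 := hmin.hasDerivAt_eq_zero hg.self_of_nhds
  have hslope : Tendsto (slope g' 0) (𝓝[≠] 0) (𝓝 a) := hasDerivAt_iff_tendsto_slope.1 hg'
  have hslope' : Tendsto (slope g' 0) (𝓝[>] 0) (𝓝 a) :=
    hslope.mono_left (nhdsWithin_mono 0 (fun t ht => ne_of_gt ht))
  have hev : ∀ᶠ t in 𝓝[>] (0:ℝ), slope g' 0 t < 0 := hslope'.eventually_lt_const hneg
  have hev2 : ∀ᶠ t in 𝓝[>] (0:ℝ), g' t < 0 := by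
    filter_upwards [hev, self_mem_nhdsWithin] with t h1 h2
    simp only [slope_def_field, h0, sub_zero] at h1
    rw [div_eq_mul_inv] at h1
    by_contra hge
    push_neg at hge
    have ht : (0:ℝ) < t := h2
    have : 0 ≤ g' t * t⁻¹ := mul_nonneg hge (inv_nonneg.2 ht.le)
    linarith
  rw [eventually_nhdsWithin_iff] at hev2
  obtain ⟨δ₁, hδ₁, hS⟩ := Metric.eventually_nhds_iff.1 (hg.and (hmin.and hev2))
  set ε := δ₁ / 2 with hε
  have hεpos : 0 < ε := by positivity
  have hεδ : ε < δ₁ := by simp [hε]; linarith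
  have hmem : ∀ t ∈ Icc (0:ℝ) ε, HasDerivAt g (g' t) t ∧ g 0 ≤ g t ∧ (t ∈ Ioi 0 → g' t < 0) := by
    intro t ht
    apply hS
    rw [Real.dist_eq, sub_zero, abs_of_nonneg ht.1]
    exact lt_of_le_of_lt ht.2 hεδ
  have hanti : StrictAntiOn g (Icc 0 ε) := by
    apply strictAntiOn_of_deriv_neg (convex_Icc 0 ε)
    · intro t ht
      exact ((hmem t ht).1).continuousAt.continuousWithinAt
    · intro t ht
      rw [interior_Icc] at ht
      rw [((hmem t ⟨ht.1.le, ht.2.le⟩).1).deriv]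
      exact (hmem t ⟨ht.1.le, ht.2.le⟩).2.2 ht.1
  have h1 : g ε < g 0 := hanti ⟨le_refl 0, hεpos.le⟩ ⟨hεpos.le, le_refl ε⟩ hεpos
  have h2 : g 0 ≤ g ε := (hmem ε ⟨hεpos.le, le_refl ε⟩).2.1
  linarith

lemma soc_max {g g' : ℝ → ℝ} {a : ℝ}
    (hg : ∀ᶠ t in 𝓝 (0:ℝ), HasDerivAt g (g' t) t)
    (hg' : HasDerivAt g' a 0)
    (hmax : IsLocalMax g 0) : a ≤ 0 := by
  have := soc_min (g := fun t => -g t) (g' := fun t => -g' t) (a := -a)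
    (by filter_upwards [hg] with t ht using ht.neg) hg'.neg hmax.neg
  linarith

variable {N : ℕ}

local notation "E" => EuclideanSpace ℝ (Fin N)

lemma localmin_curve {f : E → ℝ} {x₀ : E} (h : IsLocalMin f x₀) {γ : ℝ → E}
    (hγ : ContinuousAt γ 0) (h0 : γ 0 = x₀) : IsLocalMin (fun t => f (γ t)) 0 := by
  have htd : Tendsto γ (𝓝 0) (𝓝 x₀) := h0 ▸ hγ.tendsto
  have := htd.eventually h
  filter_upwards [this] with t ht
  simpa [h0] using ht

lemma localminon_univ {f : E → ℝ} {x₀ : E} (h : IsLocalMinOn f univ x₀) : IsLocalMin f x₀ := by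
  have := h
  rwa [IsLocalMinOn, nhdsWithin_univ] at this

lemma localmaxon_univ {f : E → ℝ} {x₀ : E} (h : IsLocalMaxOn f univ x₀) : IsLocalMax f x₀ := by
  have := h
  rwa [IsLocalMaxOn, nhdsWithin_univ] at this

lemma curve_second_deriv {φ : E → ℝ} (hφ : ContDiff ℝ 2 φ) {γ γ' : ℝ → E} {x₀ v w : E}
    (hγ : ∀ᶠ t in 𝓝 (0:ℝ), HasDerivAt γ (γ' t) t) (hγ0 : γ 0 = x₀) (hγ'0 : γ' 0 = v)
    (hγ' : HasDerivAt γ' w 0) :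
    (∀ᶠ t in 𝓝 (0:ℝ), HasDerivAt (fun s => φ (γ s)) (fderiv ℝ φ (γ t) (γ' t)) t) ∧
      HasDerivAt (fun t => fderiv ℝ φ (γ t) (γ' t))
        (fderiv ℝ (fderiv ℝ φ) x₀ v v + fderiv ℝ φ x₀ w) 0 := by
  have hdφ : Differentiable ℝ φ := hφ.differentiable (by norm_num)
  have hF : Differentiable ℝ (fderiv ℝ φ) :=
    (hφ.fderiv_right (m := 1) (by norm_num)).differentiable (by norm_num)
  constructor
  · filter_upwards [hγ] with t ht
    exact (hdφ (γ t)).hasFDerivAt.comp_hasDerivAt t ht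
  · have hγat0 : HasDerivAt γ v 0 := by
      have := hγ.self_of_nhds
      rwa [hγ'0] at this
    have hA0 : HasFDerivAt (fderiv ℝ φ) (fderiv ℝ (fderiv ℝ φ) x₀) (γ 0) := by
      rw [hγ0]; exact (hF x₀).hasFDerivAt
    have hA : HasDerivAt (fun t => fderiv ℝ φ (γ t)) (fderiv ℝ (fderiv ℝ φ) x₀ v) 0 :=
      hA0.comp_hasDerivAt 0 hγat0
    have := hA.clm_apply hγ'
    simpa [hγ0, hγ'0] using this

end VH2

namespace VH3
variable {N : ℕ}
local notation "E" => EuclideanSpace ℝ (Fin N)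

lemma line_deriv (x₀ v : E) (t : ℝ) : HasDerivAt (fun s : ℝ => x₀ + s • v) v t := by
  simpa using ((hasDerivAt_id t).smul_const v).const_add x₀

lemma norm_line_sq (x₀ v : E) (t : ℝ) :
    ‖x₀ + t • v‖ ^ 2 = ‖x₀‖ ^ 2 + 2 * (inner ℝ x₀ v : ℝ) * t + ‖v‖ ^ 2 * t ^ 2 := by
  rw [norm_add_sq_real, real_inner_smul_right, norm_smul, Real.norm_eq_abs, mul_pow, sq_abs]
  ring

lemma poly_deriv (q₀ β nv t : ℝ) :
    HasDerivAt (fun s : ℝ => q₀ + 2 * β * s + nv * s ^ 2) (2 * β + nv * (2 * t)) t := by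
  have h1 : HasDerivAt (fun s : ℝ => s ^ 2) (2 * t) t := by
    simpa using hasDerivAt_pow 2 t
  have h2 := ((h1.const_mul nv).const_add (2 * β * t))
  have h3 : HasDerivAt (fun s : ℝ => 2 * β * s) (2 * β) t := by
    simpa using (hasDerivAt_id t).const_mul (2 * β)
  have := (h3.add (h1.const_mul nv)).const_add q₀
  refine this.congr_of_eventuallyEq (Eventually.of_forall fun s => ?_)
  simp only [Pi.add_apply]
  ring

/-- second derivative of `t ↦ ψ(q₀ + 2βt + nv t²)` at `0`, in `HasDerivAt` form. -/
lemma psi_line {ψ ψ' : ℝ → ℝ} {b q₀ : ℝ} (β nv : ℝ)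
    (hd1 : ∀ᶠ s in 𝓝 q₀, HasDerivAt ψ (ψ' s) s)
    (hd2 : HasDerivAt ψ' b q₀) :
    (∀ᶠ t in 𝓝 (0:ℝ), HasDerivAt (fun s => ψ (q₀ + 2 * β * s + nv * s ^ 2))
        (ψ' (q₀ + 2 * β * t + nv * t ^ 2) * (2 * β + nv * (2 * t))) t) ∧
      HasDerivAt (fun t => ψ' (q₀ + 2 * β * t + nv * t ^ 2) * (2 * β + nv * (2 * t)))
        (b * (2 * β) * (2 * β) + ψ' q₀ * (nv * 2)) 0 := by
  have hcont : ContinuousAt (fun t : ℝ => q₀ + 2 * β * t + nv * t ^ 2) 0 :=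
    (poly_deriv q₀ β nv 0).continuousAt
  have hval : q₀ + 2 * β * 0 + nv * 0 ^ 2 = q₀ := by ring
  have htd : Tendsto (fun t : ℝ => q₀ + 2 * β * t + nv * t ^ 2) (𝓝 0) (𝓝 q₀) := by
    have := hcont.tendsto
    rwa [hval] at this
  constructor
  · filter_upwards [htd.eventually hd1] with t ht
    exact ht.comp t (poly_deriv q₀ β nv t)
  · have hc : HasDerivAt (fun t : ℝ => ψ' (q₀ + 2 * β * t + nv * t ^ 2)) (b * (2 * β)) 0 := by
      have h : HasDerivAt ψ' b (q₀ + 2 * β * 0 + nv * 0 ^ 2) := by rw [hval]; exact hd2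
      have := h.comp 0 (poly_deriv q₀ β nv 0)
      simpa [Function.comp_def] using this
    have hdlin : HasDerivAt (fun t : ℝ => 2 * β + nv * (2 * t)) (nv * 2) 0 := by
      have h3 : HasDerivAt (fun t : ℝ => nv * (2 * t)) (nv * 2) 0 := by
        simpa [mul_assoc] using ((hasDerivAt_id (0:ℝ)).const_mul 2).const_mul nv
      simpa using h3.const_add (2 * β)
    have := hc.mul hdlin
    simpa [hval, Pi.mul_def] using this

end VH3

namespace VH4
open VH VH2 VH3
variable {N k : ℕ}
local notation "E" => EuclideanSpace ℝ (Fin N)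

lemma sup_pt (hk0 : 0 < k) (hkN : k < N) {φ u : E → ℝ} {x₀ : E}
    (hφ : ContDiff ℝ 2 φ)
    (hmin : IsLocalMinOn (fun x => u x - φ x) univ x₀)
    {ψ ψ' : ℝ → ℝ} {b : ℝ}
    (hloc : ∀ᶠ x in 𝓝 x₀, u x = ψ (‖x‖ ^ 2))
    (hd1 : ∀ᶠ s in 𝓝 (‖x₀‖ ^ 2), HasDerivAt ψ (ψ' s) s)
    (hd2 : HasDerivAt ψ' b (‖x₀‖ ^ 2)) :
    Pminus k (hessianMatrix φ x₀) ≤ (k : ℝ) * (2 * ψ' (‖x₀‖ ^ 2)) := by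
  have key : ∀ v : E, (inner ℝ x₀ v : ℝ) = 0 →
      fderiv ℝ (fderiv ℝ φ) x₀ v v ≤ 2 * ψ' (‖x₀‖ ^ 2) * ‖v‖ ^ 2 := by
    intro v hv
    have hline0 : (fun s : ℝ => x₀ + s • v) 0 = x₀ := by simp
    have hlineC : ContinuousAt (fun s : ℝ => x₀ + s • v) 0 := (line_deriv x₀ v 0).continuousAt
    have htd : Tendsto (fun s : ℝ => x₀ + s • v) (𝓝 0) (𝓝 x₀) := by
      have h := hlineC.tendsto
      simpa using h
    have hq : ∀ t : ℝ, ‖x₀ + t • v‖ ^ 2 = ‖x₀‖ ^ 2 + 2 * 0 * t + ‖v‖ ^ 2 * t ^ 2 := by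
      intro t; rw [norm_line_sq, hv]
    have hu_ev : ∀ᶠ t in 𝓝 (0 : ℝ),
        u (x₀ + t • v) = ψ (‖x₀‖ ^ 2 + 2 * 0 * t + ‖v‖ ^ 2 * t ^ 2) := by
      filter_upwards [htd.eventually hloc] with t ht
      rw [ht, hq]
    obtain ⟨hg1, hg1'⟩ := psi_line (ψ := ψ) (ψ' := ψ') (b := b) 0 (‖v‖ ^ 2) hd1 hd2
    obtain ⟨hp1, hp2⟩ := curve_second_deriv hφ (γ := fun s : ℝ => x₀ + s • v)
      (γ' := fun _ => v) (x₀ := x₀) (v := v) (w := 0)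
      (Eventually.of_forall (line_deriv x₀ v)) hline0 rfl (hasDerivAt_const 0 v)
    have lmin : IsLocalMin (fun t : ℝ => u (x₀ + t • v) - φ (x₀ + t • v)) 0 :=
      localmin_curve (localminon_univ hmin) hlineC hline0
    have hgd : ∀ᶠ t in 𝓝 (0 : ℝ),
        HasDerivAt (fun s : ℝ => u (x₀ + s • v) - φ (x₀ + s • v))
          (ψ' (‖x₀‖ ^ 2 + 2 * 0 * t + ‖v‖ ^ 2 * t ^ 2) * (2 * 0 + ‖v‖ ^ 2 * (2 * t))
            - fderiv ℝ φ (x₀ + t • v) v) t := by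
      filter_upwards [hg1, hp1, hu_ev.eventually_nhds] with t h1 h2 h3
      have huc : HasDerivAt (fun s : ℝ => u (x₀ + s • v))
          (ψ' (‖x₀‖ ^ 2 + 2 * 0 * t + ‖v‖ ^ 2 * t ^ 2) * (2 * 0 + ‖v‖ ^ 2 * (2 * t))) t :=
        h1.congr_of_eventuallyEq (h3.mono fun s hs => hs)
      exact huc.sub h2
    have hgd' : HasDerivAt (fun t : ℝ =>
        ψ' (‖x₀‖ ^ 2 + 2 * 0 * t + ‖v‖ ^ 2 * t ^ 2) * (2 * 0 + ‖v‖ ^ 2 * (2 * t))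
          - fderiv ℝ φ (x₀ + t • v) v)
        ((b * (2 * 0) * (2 * 0) + ψ' (‖x₀‖ ^ 2) * (‖v‖ ^ 2 * 2))
          - (fderiv ℝ (fderiv ℝ φ) x₀ v v + fderiv ℝ φ x₀ 0)) 0 := hg1'.sub hp2
    have hsoc := soc_min hgd hgd' lmin
    simp only [map_zero, add_zero] at hsoc
    nlinarith [hsoc]
  have hherm : (hessianMatrix φ x₀).IsHermitian := hess_herm hφ
  rcases eq_or_ne x₀ 0 with h0 | h0
  · apply Pminus_le hherm hk0 hkN (w0 := EuclideanSpace.single ⟨0, by omega⟩ 1)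
    intro v _
    rw [qform_hess, sum_sq_eq_norm]
    have := key v (by rw [h0, inner_zero_left])
    linarith
  · apply Pminus_le hherm hk0 hkN (w0 := x₀)
    intro v hvw
    rw [qform_hess, sum_sq_eq_norm]
    have := key v (by rw [real_inner_comm]; exact hvw)
    linarith

lemma sub_pt (hk0 : 0 < k) (hkN : k < N) {φ u : E → ℝ} {x₀ : E}
    (hφ : ContDiff ℝ 2 φ)
    (hmax : IsLocalMaxOn (fun x => u x - φ x) univ x₀)
    {ψ ψ' : ℝ → ℝ} {b : ℝ}
    (hloc : ∀ᶠ x in 𝓝 x₀, u x = ψ (‖x‖ ^ 2))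
    (hd1 : ∀ᶠ s in 𝓝 (‖x₀‖ ^ 2), HasDerivAt ψ (ψ' s) s)
    (hd2 : HasDerivAt ψ' b (‖x₀‖ ^ 2)) (hb : 0 ≤ b) :
    (k : ℝ) * (2 * ψ' (‖x₀‖ ^ 2)) ≤ Pminus k (hessianMatrix φ x₀) := by
  have key : ∀ v : E,
      2 * ψ' (‖x₀‖ ^ 2) * ‖v‖ ^ 2 ≤ fderiv ℝ (fderiv ℝ φ) x₀ v v := by
    intro v
    have hline0 : (fun s : ℝ => x₀ + s • v) 0 = x₀ := by simp
    have hlineC : ContinuousAt (fun s : ℝ => x₀ + s • v) 0 := (line_deriv x₀ v 0).continuousAt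
    have htd : Tendsto (fun s : ℝ => x₀ + s • v) (𝓝 0) (𝓝 x₀) := by
      have h := hlineC.tendsto
      simpa using h
    set β : ℝ := (inner ℝ x₀ v : ℝ) with hβ
    have hq : ∀ t : ℝ, ‖x₀ + t • v‖ ^ 2 = ‖x₀‖ ^ 2 + 2 * β * t + ‖v‖ ^ 2 * t ^ 2 := by
      intro t; rw [norm_line_sq]
    have hu_ev : ∀ᶠ t in 𝓝 (0 : ℝ),
        u (x₀ + t • v) = ψ (‖x₀‖ ^ 2 + 2 * β * t + ‖v‖ ^ 2 * t ^ 2) := by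
      filter_upwards [htd.eventually hloc] with t ht
      rw [ht, hq]
    obtain ⟨hg1, hg1'⟩ := psi_line (ψ := ψ) (ψ' := ψ') (b := b) β (‖v‖ ^ 2) hd1 hd2
    obtain ⟨hp1, hp2⟩ := curve_second_deriv hφ (γ := fun s : ℝ => x₀ + s • v)
      (γ' := fun _ => v) (x₀ := x₀) (v := v) (w := 0)
      (Eventually.of_forall (line_deriv x₀ v)) hline0 rfl (hasDerivAt_const 0 v)
    have lmax : IsLocalMax (fun t : ℝ => u (x₀ + t • v) - φ (x₀ + t • v)) 0 := by
      have h := localmaxon_univ hmax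
      have htd2 := htd.eventually h
      filter_upwards [htd2] with t ht
      simpa [hline0] using ht
    have hgd : ∀ᶠ t in 𝓝 (0 : ℝ),
        HasDerivAt (fun s : ℝ => u (x₀ + s • v) - φ (x₀ + s • v))
          (ψ' (‖x₀‖ ^ 2 + 2 * β * t + ‖v‖ ^ 2 * t ^ 2) * (2 * β + ‖v‖ ^ 2 * (2 * t))
            - fderiv ℝ φ (x₀ + t • v) v) t := by
      filter_upwards [hg1, hp1, hu_ev.eventually_nhds] with t h1 h2 h3
      have huc : HasDerivAt (fun s : ℝ => u (x₀ + s • v))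
          (ψ' (‖x₀‖ ^ 2 + 2 * β * t + ‖v‖ ^ 2 * t ^ 2) * (2 * β + ‖v‖ ^ 2 * (2 * t))) t :=
        h1.congr_of_eventuallyEq (h3.mono fun s hs => hs)
      exact huc.sub h2
    have hgd' : HasDerivAt (fun t : ℝ =>
        ψ' (‖x₀‖ ^ 2 + 2 * β * t + ‖v‖ ^ 2 * t ^ 2) * (2 * β + ‖v‖ ^ 2 * (2 * t))
          - fderiv ℝ φ (x₀ + t • v) v)
        ((b * (2 * β) * (2 * β) + ψ' (‖x₀‖ ^ 2) * (‖v‖ ^ 2 * 2))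
          - (fderiv ℝ (fderiv ℝ φ) x₀ v v + fderiv ℝ φ x₀ 0)) 0 := hg1'.sub hp2
    have hsoc := soc_max hgd hgd' lmax
    simp only [map_zero, add_zero] at hsoc
    nlinarith [hsoc, mul_self_nonneg (2 * β), hb]
  have hherm : (hessianMatrix φ x₀).IsHermitian := hess_herm hφ
  apply Pminus_ge hherm hkN.le
  intro v
  rw [qform_hess, sum_sq_eq_norm]
  have := key v
  linarith

end VH4
namespace VH5
open VH VH2 VH3
variable {N k : ℕ}
local notation "E" => EuclideanSpace ℝ (Fin N)

lemma sub_bd (hkN : k ≤ N) {φ u : E → ℝ} {x₀ : E} (hφ : ContDiff ℝ 2 φ)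
    (hmax : IsLocalMaxOn (fun x => u x - φ x) univ x₀)
    (hu0 : u x₀ = 0) (hupos : ∀ x, 0 ≤ u x) :
    0 ≤ Pminus k (hessianMatrix φ x₀) := by
  have hφmin : IsLocalMin φ x₀ := by
    have h := localmaxon_univ hmax
    filter_upwards [h] with x hx
    have h2 := hupos x
    have hx' : u x - φ x ≤ u x₀ - φ x₀ := hx
    rw [hu0] at hx'
    linarith
  have key : ∀ v : E, 0 ≤ fderiv ℝ (fderiv ℝ φ) x₀ v v := by
    intro v
    have hline0 : (fun s : ℝ => x₀ + s • v) 0 = x₀ := by simp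
    have hlineC : ContinuousAt (fun s : ℝ => x₀ + s • v) 0 := (line_deriv x₀ v 0).continuousAt
    obtain ⟨hp1, hp2⟩ := curve_second_deriv hφ (γ := fun s : ℝ => x₀ + s • v)
      (γ' := fun _ => v) (x₀ := x₀) (v := v) (w := 0)
      (Filter.Eventually.of_forall (line_deriv x₀ v)) hline0 rfl (hasDerivAt_const 0 v)
    have lmin : IsLocalMin (fun t : ℝ => φ (x₀ + t • v)) 0 :=
      localmin_curve hφmin hlineC hline0
    have := soc_min hp1 hp2 lmin
    simpa using this
  have hherm : (hessianMatrix φ x₀).IsHermitian := hess_herm hφ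
  have := Pminus_ge (c := 0) hherm hkN (fun v => by
    rw [qform_hess]
    simpa using key v)
  simpa using this

lemma sup_bd (hk0 : 0 < k) (hkN : k < N) {φ u : E → ℝ} {x₀ : E} {R M m : ℝ}
    (hφ : ContDiff ℝ 2 φ)
    (hmin : IsLocalMinOn (fun x => u x - φ x) univ x₀)
    (hR : 0 < R) (hxR : ‖x₀‖ = R) (hm : 1 < m) (hM : 0 ≤ M)
    (hsmall : ∀ x : E, u x - u x₀ ≤ M * ‖x - x₀‖ ^ m)
    (hsphere : ∀ x : E, ‖x‖ = R → u x = u x₀) :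
    Pminus k (hessianMatrix φ x₀) ≤ 0 := by
  have hdφ : Differentiable ℝ φ := hφ.differentiable (by norm_num)
  have hmin' : ∀ᶠ x in 𝓝 x₀, φ x - φ x₀ ≤ u x - u x₀ := by
    have h := localminon_univ hmin
    filter_upwards [h] with x hx
    have hx' : u x - φ x ≥ u x₀ - φ x₀ := hx
    linarith
  -- Step B : the gradient of φ vanishes at x₀
  have hF0 : ∀ v : E, fderiv ℝ φ x₀ v = 0 := by
    have hle : ∀ v : E, fderiv ℝ φ x₀ v ≤ 0 := by
      intro v
      have hline0 : (fun s : ℝ => x₀ + s • v) 0 = x₀ := by simp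
      have hlineC : ContinuousAt (fun s : ℝ => x₀ + s • v) 0 := (line_deriv x₀ v 0).continuousAt
      have htd : Tendsto (fun s : ℝ => x₀ + s • v) (𝓝 0) (𝓝 x₀) := by
        have h := hlineC.tendsto; simpa using h
      have hgd : HasDerivAt (fun t : ℝ => φ (x₀ + t • v)) (fderiv ℝ φ x₀ v) 0 := by
        have h0 : HasFDerivAt φ (fderiv ℝ φ x₀) ((fun s : ℝ => x₀ + s • v) 0) := by
          rw [hline0]; exact (hdφ x₀).hasFDerivAt
        exact h0.comp_hasDerivAt 0 (line_deriv x₀ v 0)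
      have hslope : Tendsto (slope (fun t : ℝ => φ (x₀ + t • v)) 0) (𝓝[>] 0)
          (𝓝 (fderiv ℝ φ x₀ v)) :=
        (hasDerivAt_iff_tendsto_slope.1 hgd).mono_left
          (nhdsWithin_mono 0 (fun t ht => ne_of_gt ht))
      have hub : ∀ᶠ t in 𝓝[>] (0:ℝ), slope (fun t : ℝ => φ (x₀ + t • v)) 0 t
          ≤ M * ‖v‖ ^ m * t ^ (m - 1) := by
        have hev : ∀ᶠ t in 𝓝[>] (0:ℝ), φ (x₀ + t • v) - φ x₀ ≤ u (x₀ + t • v) - u x₀ :=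
          (htd.eventually hmin').filter_mono nhdsWithin_le_nhds |>.mono (fun t ht => by
            simpa using ht)
        filter_upwards [hev, self_mem_nhdsWithin] with t ht hmem
        have htpos : (0:ℝ) < t := hmem
        have hub1 : u (x₀ + t • v) - u x₀ ≤ M * (t * ‖v‖) ^ m := by
          have := hsmall (x₀ + t • v)
          simpa [norm_smul, abs_of_pos htpos, mul_comm] using this
        have hexp : (t * ‖v‖) ^ m = t ^ m * ‖v‖ ^ m :=
          Real.mul_rpow htpos.le (norm_nonneg v)
        have ht1 : t ^ (m - 1) * t = t ^ m := by
          rw [← Real.rpow_add_one (ne_of_gt htpos) (m - 1)]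
          norm_num
        rw [slope_def_field]
        simp only [sub_zero]
        rw [show x₀ + (0:ℝ) • v = x₀ by simp]
        rw [div_le_iff₀ htpos]
        calc φ (x₀ + t • v) - φ x₀ ≤ M * (t * ‖v‖) ^ m := le_trans ht hub1
          _ = M * ‖v‖ ^ m * t ^ m := by rw [hexp]; ring
          _ = M * ‖v‖ ^ m * t ^ (m - 1) * t := by rw [← ht1]; ring
      have htends : Tendsto (fun t : ℝ => M * ‖v‖ ^ m * t ^ (m - 1)) (𝓝[>] (0:ℝ)) (𝓝 0) := by
        have hc : ContinuousAt (fun t : ℝ => t ^ (m - 1)) 0 :=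
          Real.continuousAt_rpow_const 0 (m - 1) (Or.inr (by linarith))
        have h1 : Tendsto (fun t : ℝ => t ^ (m - 1)) (𝓝[>] (0:ℝ)) (𝓝 ((0:ℝ) ^ (m - 1))) :=
          (hc.tendsto).mono_left nhdsWithin_le_nhds
        rw [Real.zero_rpow (by linarith : m - 1 ≠ 0)] at h1
        have := h1.const_mul (M * ‖v‖ ^ m)
        simpa using this
      exact le_of_tendsto_of_tendsto hslope htends hub
    intro v
    have h1 := hle v
    have h2 := hle (-v)
    rw [map_neg] at h2
    linarith
  -- Step C : tangential second derivatives of φ are nonpositive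
  have key : ∀ v : E, (inner ℝ x₀ v : ℝ) = 0 → fderiv ℝ (fderiv ℝ φ) x₀ v v ≤ 0 := by
    intro v hv
    rcases eq_or_ne v 0 with rfl | hvne
    · simp
    have hnv : (0:ℝ) < ‖v‖ ^ 2 := pow_pos (norm_pos_iff.2 hvne) 2
    set nv := ‖v‖ ^ 2 with hnvdef
    set η : ℝ → ℝ := fun t => Real.sqrt (R ^ 2 - nv * t ^ 2) / R with hηdef
    set η' : ℝ → ℝ := fun t => 1 / (2 * Real.sqrt (R ^ 2 - nv * t ^ 2)) * (-(nv * (2 * t))) / R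
      with hη'def
    have hpos_ev : ∀ᶠ t in 𝓝 (0:ℝ), 0 < R ^ 2 - nv * t ^ 2 := by
      have hc : ContinuousAt (fun t : ℝ => R ^ 2 - nv * t ^ 2) 0 := by fun_prop
      have h0 : (0:ℝ) < R ^ 2 - nv * 0 ^ 2 := by
        have : (0:ℝ) < R ^ 2 := by positivity
        nlinarith
      exact hc.tendsto.eventually (eventually_gt_nhds h0) |>.mono (fun t ht => ht)
    have hW0 : (0:ℝ) < R ^ 2 - nv * 0 ^ 2 := by nlinarith [sq_nonneg R, hR]
    have hη0 : η 0 = 1 := by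
      rw [hηdef]
      simp only [ne_eq, OfNat.ofNat_ne_zero, not_false_eq_true, zero_pow, mul_zero, sub_zero]
      rw [Real.sqrt_sq hR.le, div_self (ne_of_gt hR)]
    have hη'0 : η' 0 = 0 := by rw [hη'def]; simp
    have hηd : ∀ᶠ t in 𝓝 (0:ℝ), HasDerivAt η (η' t) t := by
      filter_upwards [hpos_ev] with t hW
      have h1 : HasDerivAt (fun s : ℝ => s ^ 2) (2 * t) t := by simpa using hasDerivAt_pow 2 t
      have hpoly : HasDerivAt (fun s : ℝ => R ^ 2 - nv * s ^ 2) (-(nv * (2 * t))) t := by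
        simpa using (h1.const_mul nv).const_sub (R ^ 2)
      have hsq : HasDerivAt (fun s : ℝ => Real.sqrt (R ^ 2 - nv * s ^ 2))
          (1 / (2 * Real.sqrt (R ^ 2 - nv * t ^ 2)) * (-(nv * (2 * t)))) t :=
        (Real.hasDerivAt_sqrt (ne_of_gt hW)).comp t hpoly
      exact hsq.div_const R
    -- differentiability of η' at 0
    have h10 : HasDerivAt (fun s : ℝ => s ^ 2) (2 * 0) (0:ℝ) := by simpa using hasDerivAt_pow 2 (0:ℝ)
    have hpoly0 : HasDerivAt (fun s : ℝ => R ^ 2 - nv * s ^ 2) (-(nv * (2 * 0))) 0 := by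
      simpa using (h10.const_mul nv).const_sub (R ^ 2)
    have hsq0d : HasDerivAt (fun s : ℝ => Real.sqrt (R ^ 2 - nv * s ^ 2))
        (1 / (2 * Real.sqrt (R ^ 2 - nv * 0 ^ 2)) * (-(nv * (2 * 0)))) 0 :=
      (Real.hasDerivAt_sqrt (ne_of_gt hW0)).comp 0 hpoly0
    have hsqrtpos : 0 < Real.sqrt (R ^ 2 - nv * 0 ^ 2) := Real.sqrt_pos.2 hW0
    have hη'diff : DifferentiableAt ℝ η' 0 := by
      rw [hη'def]
      apply DifferentiableAt.div_const
      apply DifferentiableAt.mul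
      · exact (differentiableAt_const 1).div (hsq0d.differentiableAt.const_mul 2)
          (by positivity)
      · fun_prop
    set w2 := deriv η' 0 with hw2def
    have hw2 : HasDerivAt η' w2 0 := hη'diff.hasDerivAt
    -- the sphere curve
    have hγd : ∀ᶠ t in 𝓝 (0:ℝ), HasDerivAt (fun s => η s • x₀ + s • v) (η' t • x₀ + v) t := by
      filter_upwards [hηd] with t ht
      have h2 : HasDerivAt (fun s : ℝ => s • v) v t := by
        simpa using (hasDerivAt_id t).smul_const v
      exact (ht.smul_const x₀).add h2
    have hγ0 : (fun s : ℝ => η s • x₀ + s • v) 0 = x₀ := by simp [hη0]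
    have hγ'0 : η' 0 • x₀ + v = v := by rw [hη'0]; simp
    have hγ'd : HasDerivAt (fun t => η' t • x₀ + v) (w2 • x₀) 0 := (hw2.smul_const x₀).add_const v
    obtain ⟨hp1, hp2⟩ := curve_second_deriv hφ (γ := fun s : ℝ => η s • x₀ + s • v)
      (γ' := fun t => η' t • x₀ + v) (x₀ := x₀) (v := v) (w := w2 • x₀) hγd hγ0 hγ'0 hγ'd
    have hF0' : fderiv ℝ φ x₀ (w2 • x₀) = 0 := by rw [map_smul, hF0, smul_zero]
    rw [hF0', add_zero] at hp2
    -- the curve stays on the sphere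
    have hnormγ : ∀ᶠ t in 𝓝 (0:ℝ), ‖η t • x₀ + t • v‖ = R := by
      filter_upwards [hpos_ev] with t hW
      have e1 : (inner ℝ (η t • x₀) (t • v) : ℝ) = 0 := by
        rw [real_inner_smul_left, real_inner_smul_right, hv]; ring
      have e2 : ‖η t • x₀‖ ^ 2 = (R ^ 2 - nv * t ^ 2) / R ^ 2 * R ^ 2 := by
        rw [norm_smul, mul_pow, Real.norm_eq_abs, sq_abs, hxR, hηdef, div_pow,
          Real.sq_sqrt hW.le]
      have e3 : ‖t • v‖ ^ 2 = nv * t ^ 2 := by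
        rw [norm_smul, mul_pow, Real.norm_eq_abs, sq_abs, hnvdef]; ring
      have hsq : ‖η t • x₀ + t • v‖ ^ 2 = R ^ 2 := by
        rw [norm_add_sq_real, e1, e2, e3]
        field_simp
        ring
      have h1 : ‖η t • x₀ + t • v‖ = Real.sqrt (R ^ 2) := by
        rw [← hsq, Real.sqrt_sq (norm_nonneg _)]
      rw [h1, Real.sqrt_sq hR.le]
    -- local max of φ along the curve
    have hγC : ContinuousAt (fun s : ℝ => η s • x₀ + s • v) 0 :=
      (hγd.self_of_nhds).continuousAt
    have htdγ : Tendsto (fun s : ℝ => η s • x₀ + s • v) (𝓝 0) (𝓝 x₀) := by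
      have h := hγC.tendsto
      simpa [hη0] using h
    have lmax : IsLocalMax (fun t : ℝ => φ (η t • x₀ + t • v)) 0 := by
      filter_upwards [htdγ.eventually hmin', hnormγ] with t h1 h2
      have h3 : u (η t • x₀ + t • v) = u x₀ := hsphere _ h2
      have h4 : φ (η t • x₀ + t • v) ≤ φ x₀ := by linarith [h1, h3.le, h3.ge]
      show φ (η t • x₀ + t • v) ≤ φ (η 0 • x₀ + (0:ℝ) • v)
      rw [show η 0 • x₀ + (0:ℝ) • v = x₀ by simp [hη0]]
      exact h4
    have hsoc := soc_max hp1 hp2 lmax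
    exact hsoc
  -- Step D : conclude via the spectral estimate
  have hherm : (hessianMatrix φ x₀).IsHermitian := hess_herm hφ
  have hfin := Pminus_le (c := 0) hherm hk0 hkN (w0 := x₀) (fun v hv => by
    rw [qform_hess]
    have := key v (by rw [real_inner_comm]; exact hv)
    simpa using this)
  simpa using hfin

end VH5
namespace VH6
open VH VH2 VH3 VH4 VH5

lemma dlin (c₀ R s : ℝ) : HasDerivAt (fun r : ℝ => c₀ * (R ^ 2 - r)) (-c₀) s := by
  have h := ((hasDerivAt_id s).const_sub (R ^ 2)).const_mul c₀
  simpa using h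

lemma norm_lt_event {N : ℕ} {x₀ : EuclideanSpace ℝ (Fin N)} {R : ℝ} (h : ‖x₀‖ < R) :
    ∀ᶠ x in 𝓝 x₀, ‖x‖ < R := by
  have ht : Tendsto (fun x : EuclideanSpace ℝ (Fin N) => ‖x‖) (𝓝 x₀) (𝓝 ‖x₀‖) :=
    continuous_norm.continuousAt
  exact ht.eventually (eventually_of_mem (Iio_mem_nhds h) (fun y hy => hy))

lemma norm_gt_event {N : ℕ} {x₀ : EuclideanSpace ℝ (Fin N)} {R : ℝ} (h : R < ‖x₀‖) :
    ∀ᶠ x in 𝓝 x₀, R < ‖x‖ := by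
  have ht : Tendsto (fun x : EuclideanSpace ℝ (Fin N) => ‖x‖) (𝓝 x₀) (𝓝 ‖x₀‖) :=
    continuous_norm.continuousAt
  exact ht.eventually (eventually_of_mem (Ioi_mem_nhds h) (fun y hy => hy))

lemma drpow (c₀ R e s : ℝ) (hX : 0 < c₀ * (R ^ 2 - s)) :
    HasDerivAt (fun r : ℝ => (c₀ * (R ^ 2 - r)) ^ e)
      (e * (c₀ * (R ^ 2 - s)) ^ (e - 1) * -c₀) s := by
  have hout := Real.hasDerivAt_rpow_const (x := c₀ * (R ^ 2 - s)) (p := e) (Or.inl (ne_of_gt hX))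
  have h := hout.comp s (dlin c₀ R s)
  simpa [Function.comp_def] using h

theorem compact_case (N k : ℕ) (hk0 : 0 < k) (hkN : k < N) (p : ℝ) (hp : 0 < p) (hp1 : p < 1)
    (R : ℝ) (hR : 0 < R) (u : EuclideanSpace ℝ (Fin N) → ℝ)
    (hu : u = fun x => if ‖x‖ ≤ R then
      ((1 - p) / (2 * (k : ℝ)) * (R ^ 2 - ‖x‖ ^ 2)) ^ (1 / (1 - p)) else 0) :
    Continuous u ∧ (∀ x, 0 ≤ u x) ∧ (∃ x, u x ≠ 0) ∧
      IsViscositySolution (Pminus k) (fun t => t ^ p) Set.univ u := by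
  have h1p : 0 < 1 - p := by linarith
  have hkR : (0 : ℝ) < k := by exact_mod_cast hk0
  set c₀ : ℝ := (1 - p) / (2 * (k : ℝ)) with hc₀def
  set m : ℝ := 1 / (1 - p) with hmdef
  have hc₀ : 0 < c₀ := div_pos h1p (by positivity)
  have hm1 : 1 < m := one_lt_one_div h1p (by linarith)
  have hm0 : 0 < m := by linarith
  have hux : ∀ x, u x = if ‖x‖ ≤ R then (c₀ * (R ^ 2 - ‖x‖ ^ 2)) ^ m else 0 := by
    intro x; rw [hu]
  have hmp : m * p = m - 1 := by rw [hmdef]; field_simp; ring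
  have h2kmc : 2 * (k : ℝ) * m * c₀ = 1 := by
    rw [hmdef, hc₀def]; field_simp
  -- representation as a globally continuous function
  have hrepr : ∀ x, u x = (max (c₀ * (R ^ 2 - ‖x‖ ^ 2)) 0) ^ m := by
    intro x
    rw [hux x]
    by_cases hx : ‖x‖ ≤ R
    · rw [if_pos hx, max_eq_left]
      exact mul_nonneg hc₀.le (sub_nonneg.2 (pow_le_pow_left₀ (norm_nonneg x) hx 2))
    · push_neg at hx
      rw [if_neg (not_le.2 hx), max_eq_right, Real.zero_rpow (ne_of_gt hm0)]
      have : R ^ 2 < ‖x‖ ^ 2 := pow_lt_pow_left₀ hx hR.le (by norm_num)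
      exact mul_nonpos_of_nonneg_of_nonpos hc₀.le (by linarith)
  have hcont : Continuous u := by
    rw [show u = (fun y : ℝ => y ^ m) ∘ (fun x : EuclideanSpace ℝ (Fin N) =>
        max (c₀ * (R ^ 2 - ‖x‖ ^ 2)) 0) from funext hrepr]
    apply Continuous.comp
    · rw [continuous_iff_continuousAt]
      intro y
      exact Real.continuousAt_rpow_const y m (Or.inr hm0.le)
    · apply Continuous.max _ continuous_const
      exact continuous_const.mul (continuous_const.sub ((continuous_norm).pow 2))
  have hnonneg : ∀ x, 0 ≤ u x := by
    intro x; rw [hrepr]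
    exact Real.rpow_nonneg (le_max_right _ _) m
  have hne : ∃ x, u x ≠ 0 := by
    refine ⟨0, ?_⟩
    rw [hux 0]
    rw [if_pos (by simpa using hR.le)]
    have : (0:ℝ) < c₀ * (R ^ 2 - ‖(0 : EuclideanSpace ℝ (Fin N))‖ ^ 2) := by
      simp only [norm_zero]
      have h2 : (0:ℝ) < R ^ 2 := pow_pos hR 2
      nlinarith
    exact ne_of_gt (Real.rpow_pos_of_pos this m)
  refine ⟨hcont, hnonneg, hne, ?_, ?_⟩
  -- SUBSOLUTION
  · intro x₀ _ φ hφ hmax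
    show 0 ≤ Pminus k (hessianMatrix φ x₀) + (u x₀) ^ p
    rcases lt_trichotomy ‖x₀‖ R with hlt | heq | hgt
    · -- interior
      have hq₀lt : ‖x₀‖ ^ 2 < R ^ 2 := by nlinarith [norm_nonneg x₀]
      have hX₀ : 0 < c₀ * (R ^ 2 - ‖x₀‖ ^ 2) := mul_pos hc₀ (by linarith)
      have hd1 : ∀ᶠ s in 𝓝 (‖x₀‖ ^ 2), HasDerivAt (fun r => (c₀ * (R ^ 2 - r)) ^ m)
          ((fun s => m * (c₀ * (R ^ 2 - s)) ^ (m - 1) * -c₀) s) s := by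
        filter_upwards [eventually_of_mem (Iio_mem_nhds hq₀lt) (fun s hs => hs)] with s hs
        exact drpow c₀ R m s (mul_pos hc₀ (sub_pos.2 (mem_Iio.1 hs)))
      have hd2 : HasDerivAt (fun s => m * (c₀ * (R ^ 2 - s)) ^ (m - 1) * -c₀)
          (m * ((m - 1) * (c₀ * (R ^ 2 - ‖x₀‖ ^ 2)) ^ (m - 1 - 1) * -c₀) * -c₀) (‖x₀‖ ^ 2) :=
        ((drpow c₀ R (m - 1) (‖x₀‖ ^ 2) hX₀).const_mul m).mul_const (-c₀)
      have hb : 0 ≤ m * ((m - 1) * (c₀ * (R ^ 2 - ‖x₀‖ ^ 2)) ^ (m - 1 - 1) * -c₀) * -c₀ := by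
        have hZ : 0 ≤ (c₀ * (R ^ 2 - ‖x₀‖ ^ 2)) ^ (m - 1 - 1) := Real.rpow_nonneg hX₀.le _
        have he : m * ((m - 1) * (c₀ * (R ^ 2 - ‖x₀‖ ^ 2)) ^ (m - 1 - 1) * -c₀) * -c₀
            = m * (m - 1) * (c₀ * (R ^ 2 - ‖x₀‖ ^ 2)) ^ (m - 1 - 1) * (c₀ * c₀) := by ring
        rw [he]
        exact mul_nonneg (mul_nonneg (mul_nonneg (by linarith) (by linarith)) hZ)
          (mul_self_nonneg c₀)
      have hloc : ∀ᶠ x in 𝓝 x₀, u x = (fun s => (c₀ * (R ^ 2 - s)) ^ m) (‖x‖ ^ 2) := by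
        have hevn : ∀ᶠ x in 𝓝 x₀, ‖x‖ < R := norm_lt_event hlt
        filter_upwards [hevn] with x hx
        rw [hux x, if_pos hx.le]
      have hkey := VH4.sub_pt hk0 hkN hφ hmax hloc hd1 hd2 hb
      have hux₀ : u x₀ = (c₀ * (R ^ 2 - ‖x₀‖ ^ 2)) ^ m := by rw [hux x₀, if_pos hlt.le]
      have hup : (u x₀) ^ p = (c₀ * (R ^ 2 - ‖x₀‖ ^ 2)) ^ (m - 1) := by
        rw [hux₀, ← Real.rpow_mul hX₀.le, hmp]
      have hk2 : (k : ℝ) * (2 * (m * (c₀ * (R ^ 2 - ‖x₀‖ ^ 2)) ^ (m - 1) * -c₀))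
          = -((c₀ * (R ^ 2 - ‖x₀‖ ^ 2)) ^ (m - 1)) := by
        linear_combination (-((c₀ * (R ^ 2 - ‖x₀‖ ^ 2)) ^ (m - 1))) * h2kmc
      have hkey' : (k:ℝ) * (2 * (m * (c₀ * (R ^ 2 - ‖x₀‖ ^ 2)) ^ (m - 1) * -c₀))
          ≤ Pminus k (hessianMatrix φ x₀) := hkey
      rw [hup]
      linarith [hkey', hk2]
    · -- boundary
      have hu0 : u x₀ = 0 := by
        rw [hux x₀, if_pos heq.le, heq, sub_self, mul_zero, Real.zero_rpow (ne_of_gt hm0)]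
      have h0 := VH5.sub_bd hkN.le hφ hmax hu0 hnonneg
      rw [hu0, Real.zero_rpow (ne_of_gt hp)]
      linarith
    · -- outside
      have hu0 : u x₀ = 0 := by rw [hux x₀, if_neg (not_le.2 hgt)]
      have hloc : ∀ᶠ x in 𝓝 x₀, u x = (fun _ : ℝ => (0:ℝ)) (‖x‖ ^ 2) := by
        have hevn : ∀ᶠ x in 𝓝 x₀, R < ‖x‖ := norm_gt_event hgt
        filter_upwards [hevn] with x hx
        rw [hux x, if_neg (not_le.2 hx)]
      have hkey := VH4.sub_pt hk0 hkN hφ hmax hloc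
        (Filter.Eventually.of_forall (fun s => hasDerivAt_const s (0:ℝ)))
        (hasDerivAt_const _ (0:ℝ)) (le_refl 0)
      rw [hu0, Real.zero_rpow (ne_of_gt hp)]
      simpa using hkey
  -- SUPERSOLUTION
  · intro x₀ _ φ hφ hmin
    show Pminus k (hessianMatrix φ x₀) + (u x₀) ^ p ≤ 0
    rcases lt_trichotomy ‖x₀‖ R with hlt | heq | hgt
    · have hq₀lt : ‖x₀‖ ^ 2 < R ^ 2 := by nlinarith [norm_nonneg x₀]
      have hX₀ : 0 < c₀ * (R ^ 2 - ‖x₀‖ ^ 2) := mul_pos hc₀ (by linarith)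
      have hd1 : ∀ᶠ s in 𝓝 (‖x₀‖ ^ 2), HasDerivAt (fun r => (c₀ * (R ^ 2 - r)) ^ m)
          ((fun s => m * (c₀ * (R ^ 2 - s)) ^ (m - 1) * -c₀) s) s := by
        filter_upwards [eventually_of_mem (Iio_mem_nhds hq₀lt) (fun s hs => hs)] with s hs
        exact drpow c₀ R m s (mul_pos hc₀ (sub_pos.2 (mem_Iio.1 hs)))
      have hd2 : HasDerivAt (fun s => m * (c₀ * (R ^ 2 - s)) ^ (m - 1) * -c₀)
          (m * ((m - 1) * (c₀ * (R ^ 2 - ‖x₀‖ ^ 2)) ^ (m - 1 - 1) * -c₀) * -c₀) (‖x₀‖ ^ 2) :=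
        ((drpow c₀ R (m - 1) (‖x₀‖ ^ 2) hX₀).const_mul m).mul_const (-c₀)
      have hloc : ∀ᶠ x in 𝓝 x₀, u x = (fun s => (c₀ * (R ^ 2 - s)) ^ m) (‖x‖ ^ 2) := by
        have hevn : ∀ᶠ x in 𝓝 x₀, ‖x‖ < R := norm_lt_event hlt
        filter_upwards [hevn] with x hx
        rw [hux x, if_pos hx.le]
      have hkey := VH4.sup_pt hk0 hkN hφ hmin hloc hd1 hd2
      have hux₀ : u x₀ = (c₀ * (R ^ 2 - ‖x₀‖ ^ 2)) ^ m := by rw [hux x₀, if_pos hlt.le]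
      have hup : (u x₀) ^ p = (c₀ * (R ^ 2 - ‖x₀‖ ^ 2)) ^ (m - 1) := by
        rw [hux₀, ← Real.rpow_mul hX₀.le, hmp]
      have hk2 : (k : ℝ) * (2 * (m * (c₀ * (R ^ 2 - ‖x₀‖ ^ 2)) ^ (m - 1) * -c₀))
          = -((c₀ * (R ^ 2 - ‖x₀‖ ^ 2)) ^ (m - 1)) := by
        linear_combination (-((c₀ * (R ^ 2 - ‖x₀‖ ^ 2)) ^ (m - 1))) * h2kmc
      have hkey' : Pminus k (hessianMatrix φ x₀)
          ≤ (k:ℝ) * (2 * (m * (c₀ * (R ^ 2 - ‖x₀‖ ^ 2)) ^ (m - 1) * -c₀)) := hkey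
      rw [hup]
      linarith [hkey', hk2]
    · -- boundary, hard case
      have hu0 : u x₀ = 0 := by
        rw [hux x₀, if_pos heq.le, heq, sub_self, mul_zero, Real.zero_rpow (ne_of_gt hm0)]
      set M : ℝ := (c₀ * (2 * R)) ^ m with hMdef
      have hM0 : (0:ℝ) ≤ c₀ * (2 * R) := mul_nonneg hc₀.le (by linarith)
      have hM : 0 ≤ M := Real.rpow_nonneg hM0 m
      have hsmall : ∀ x, u x - u x₀ ≤ M * ‖x - x₀‖ ^ m := by
        intro x
        rw [hu0, sub_zero]
        by_cases hx : ‖x‖ ≤ R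
        · rw [hux x, if_pos hx]
          have hd : ‖x₀‖ - ‖x‖ ≤ ‖x - x₀‖ := by
            rw [norm_sub_rev]
            exact (norm_sub_norm_le x₀ x)
          have hbase : c₀ * (R ^ 2 - ‖x‖ ^ 2) ≤ c₀ * (2 * R) * ‖x - x₀‖ := by
            have hd' : R - ‖x‖ ≤ ‖x - x₀‖ := by rw [← heq]; exact hd
            have h1 : R ^ 2 - ‖x‖ ^ 2 ≤ 2 * R * ‖x - x₀‖ := by
              have hRx : (0:ℝ) ≤ R + ‖x‖ := by nlinarith [norm_nonneg x]
              nlinarith [mul_le_mul_of_nonneg_right hd' hRx, norm_nonneg (x - x₀),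
                norm_nonneg x, mul_le_mul_of_nonneg_left hx (norm_nonneg (x - x₀))]
            calc c₀ * (R ^ 2 - ‖x‖ ^ 2) ≤ c₀ * (2 * R * ‖x - x₀‖) :=
                  mul_le_mul_of_nonneg_left h1 hc₀.le
              _ = c₀ * (2 * R) * ‖x - x₀‖ := by ring
          calc (c₀ * (R ^ 2 - ‖x‖ ^ 2)) ^ m ≤ (c₀ * (2 * R) * ‖x - x₀‖) ^ m :=
                Real.rpow_le_rpow (mul_nonneg hc₀.le
                  (by nlinarith [pow_le_pow_left₀ (norm_nonneg x) hx 2])) hbase hm0.le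
            _ = M * ‖x - x₀‖ ^ m := by
                rw [hMdef, ← Real.mul_rpow hM0 (norm_nonneg _)]
        · rw [hux x, if_neg hx]
          exact mul_nonneg hM (Real.rpow_nonneg (norm_nonneg _) m)
      have hsphere : ∀ x, ‖x‖ = R → u x = u x₀ := by
        intro x hx
        rw [hu0, hux x, if_pos hx.le, hx, sub_self, mul_zero, Real.zero_rpow (ne_of_gt hm0)]
      have h0 := VH5.sup_bd hk0 hkN hφ hmin hR heq hm1 hM hsmall hsphere
      rw [hu0, Real.zero_rpow (ne_of_gt hp)]
      linarith
    · have hu0 : u x₀ = 0 := by rw [hux x₀, if_neg (not_le.2 hgt)]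
      have hloc : ∀ᶠ x in 𝓝 x₀, u x = (fun _ : ℝ => (0:ℝ)) (‖x‖ ^ 2) := by
        have hevn : ∀ᶠ x in 𝓝 x₀, R < ‖x‖ := norm_gt_event hgt
        filter_upwards [hevn] with x hx
        rw [hux x, if_neg (not_le.2 hx)]
      have hkey := VH4.sup_pt hk0 hkN hφ hmin hloc
        (Filter.Eventually.of_forall (fun s => hasDerivAt_const s (0:ℝ)))
        (hasDerivAt_const _ (0:ℝ))
      rw [hu0, Real.zero_rpow (ne_of_gt hp)]
      simpa using hkey

end VH6
namespace VH7
open VH VH2 VH3 VH4 VH5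

lemma global_case (N k : ℕ) (hk0 : 0 < k) (hkN : k < N) (p : ℝ) (hp : 0 < p)
    {ψ ψ' ψ'' : ℝ → ℝ} {U : Set ℝ} (hU : IsOpen U) (hUin : ∀ s : ℝ, 0 ≤ s → s ∈ U)
    (hd1 : ∀ s ∈ U, HasDerivAt ψ (ψ' s) s)
    (hd2 : ∀ s : ℝ, 0 ≤ s → HasDerivAt ψ' (ψ'' s) s)
    (hb : ∀ s : ℝ, 0 ≤ s → 0 ≤ ψ'' s)
    (hode : ∀ s : ℝ, 0 ≤ s → (k : ℝ) * (2 * ψ' s) = -(ψ s) ^ p)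
    (hpos : ∀ s : ℝ, 0 ≤ s → 0 < ψ s) :
    ∃ u : EuclideanSpace ℝ (Fin N) → ℝ, Continuous u ∧ (∀ x, 0 ≤ u x) ∧ (∃ x, u x ≠ 0) ∧
      IsViscositySolution (Pminus k) (fun t => t ^ p) Set.univ u := by
  refine ⟨fun x => ψ (‖x‖ ^ 2), ?_, ?_, ?_, ?_, ?_⟩
  · rw [continuous_iff_continuousAt]
    intro x
    have h1 : ContinuousAt ψ (‖x‖ ^ 2) :=
      (hd1 _ (hUin _ (by positivity))).continuousAt
    have h2 : ContinuousAt (fun x : EuclideanSpace ℝ (Fin N) => ‖x‖ ^ 2) x :=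
      (continuous_norm.pow 2).continuousAt
    exact ContinuousAt.comp (x := x) h1 h2
  · intro x; exact (hpos _ (by positivity)).le
  · exact ⟨0, ne_of_gt (hpos _ (by positivity))⟩
  · intro x₀ _ φ hφ hmax
    have hq0 : (0:ℝ) ≤ ‖x₀‖ ^ 2 := by positivity
    have hd1' : ∀ᶠ s in 𝓝 (‖x₀‖ ^ 2), HasDerivAt ψ (ψ' s) s :=
      eventually_of_mem (hU.mem_nhds (hUin _ hq0)) hd1
    have hkey := VH4.sub_pt hk0 hkN hφ hmax
      (Filter.Eventually.of_forall (fun x => rfl)) hd1' (hd2 _ hq0) (hb _ hq0)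
    have h2 := hode _ hq0
    show 0 ≤ Pminus k (hessianMatrix φ x₀) + ψ (‖x₀‖ ^ 2) ^ p
    linarith [hkey, h2]
  · intro x₀ _ φ hφ hmin
    have hq0 : (0:ℝ) ≤ ‖x₀‖ ^ 2 := by positivity
    have hd1' : ∀ᶠ s in 𝓝 (‖x₀‖ ^ 2), HasDerivAt ψ (ψ' s) s :=
      eventually_of_mem (hU.mem_nhds (hUin _ hq0)) hd1
    have hkey := VH4.sup_pt hk0 hkN hφ hmin
      (Filter.Eventually.of_forall (fun x => rfl)) hd1' (hd2 _ hq0)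
    have h2 := hode _ hq0
    show Pminus k (hessianMatrix φ x₀) + ψ (‖x₀‖ ^ 2) ^ p ≤ 0
    linarith [hkey, h2]

lemma case_p_eq_one (N k : ℕ) (hk0 : 0 < k) (hkN : k < N) :
    ∃ u : EuclideanSpace ℝ (Fin N) → ℝ, Continuous u ∧ (∀ x, 0 ≤ u x) ∧ (∃ x, u x ≠ 0) ∧
      IsViscositySolution (Pminus k) (fun t => t ^ (1:ℝ)) Set.univ u := by
  have hkR : (0:ℝ) < k := by exact_mod_cast hk0
  set c : ℝ := -(1 / (2 * (k:ℝ))) with hcdef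
  have hdb : ∀ s : ℝ, HasDerivAt (fun r : ℝ => Real.exp (c * r)) (Real.exp (c * s) * c) s := by
    intro s
    have := (Real.hasDerivAt_exp (c * s)).comp s ((hasDerivAt_id s).const_mul c)
    simpa [Function.comp_def] using this
  apply global_case N k hk0 hkN 1 one_pos (U := Set.univ) isOpen_univ (fun s _ => mem_univ s)
    (ψ := fun s => Real.exp (c * s)) (ψ' := fun s => Real.exp (c * s) * c)
    (ψ'' := fun s => Real.exp (c * s) * c * c)
  · exact fun s _ => hdb s
  · exact fun s _ => (hdb s).mul_const c
  · intro s _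
    have h1 : Real.exp (c * s) * c * c = Real.exp (c * s) * (c * c) := by ring
    rw [h1]
    exact mul_nonneg (Real.exp_pos _).le (mul_self_nonneg c)
  · intro s _
    rw [Real.rpow_one]
    have h2kc : 2 * (k:ℝ) * c = -1 := by rw [hcdef]; field_simp
    linear_combination Real.exp (c * s) * h2kc
  · exact fun s _ => Real.exp_pos _

lemma case_p_gt_one (N k : ℕ) (hk0 : 0 < k) (hkN : k < N) (p : ℝ) (hp1 : 1 < p) :
    ∃ u : EuclideanSpace ℝ (Fin N) → ℝ, Continuous u ∧ (∀ x, 0 ≤ u x) ∧ (∃ x, u x ≠ 0) ∧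
      IsViscositySolution (Pminus k) (fun t => t ^ p) Set.univ u := by
  have hkR : (0:ℝ) < k := by exact_mod_cast hk0
  have hp1' : 0 < p - 1 := by linarith
  set c₁ : ℝ := (p - 1) / (2 * (k:ℝ)) with hc₁def
  set s' : ℝ := 1 / (p - 1) with hs'def
  have hc₁ : 0 < c₁ := div_pos hp1' (by positivity)
  have hs' : 0 < s' := by rw [hs'def]; positivity
  have hdb : ∀ s : ℝ, HasDerivAt (fun r : ℝ => 1 + c₁ * r) c₁ s := by
    intro s
    have := ((hasDerivAt_id s).const_mul c₁).const_add 1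
    simpa using this
  have hchain : ∀ (e s : ℝ), 0 < 1 + c₁ * s →
      HasDerivAt (fun r : ℝ => (1 + c₁ * r) ^ e) (e * (1 + c₁ * s) ^ (e - 1) * c₁) s := by
    intro e s hX
    have hout := Real.hasDerivAt_rpow_const (x := 1 + c₁ * s) (p := e) (Or.inl (ne_of_gt hX))
    have := hout.comp s (hdb s)
    simpa [Function.comp_def] using this
  apply global_case N k hk0 hkN p (by linarith) (U := {s : ℝ | 0 < 1 + c₁ * s})
    (isOpen_lt continuous_const (continuous_const.add (continuous_const.mul continuous_id)))
    (fun s hs => by simp only [mem_setOf_eq]; nlinarith)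
    (ψ := fun s => (1 + c₁ * s) ^ (-s')) (ψ' := fun s => -s' * (1 + c₁ * s) ^ (-s' - 1) * c₁)
    (ψ'' := fun s => -s' * ((-s' - 1) * (1 + c₁ * s) ^ (-s' - 1 - 1) * c₁) * c₁)
  · exact fun s hs => hchain (-s') s hs
  · intro s hs
    have hX : 0 < 1 + c₁ * s := by nlinarith
    exact ((hchain (-s' - 1) s hX).const_mul (-s')).mul_const c₁
  · intro s hs
    have hX : 0 < 1 + c₁ * s := by nlinarith
    have hZ : 0 ≤ (1 + c₁ * s) ^ (-s' - 1 - 1) := Real.rpow_nonneg hX.le _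
    have he : -s' * ((-s' - 1) * (1 + c₁ * s) ^ (-s' - 1 - 1) * c₁) * c₁
        = (s' * (s' + 1)) * (1 + c₁ * s) ^ (-s' - 1 - 1) * (c₁ * c₁) := by ring
    rw [he]
    exact mul_nonneg (mul_nonneg (by nlinarith) hZ) (mul_self_nonneg c₁)
  · intro s hs
    have hX : 0 < 1 + c₁ * s := by nlinarith
    have hexp : ((1 + c₁ * s) ^ (-s')) ^ p = (1 + c₁ * s) ^ (-s' - 1) := by
      rw [← Real.rpow_mul hX.le]
      congr 1
      rw [hs'def]
      field_simp
      ring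
    rw [hexp]
    have hfac : 2 * (k:ℝ) * s' * c₁ = 1 := by rw [hs'def, hc₁def]; field_simp
    linear_combination (-((1 + c₁ * s) ^ (-s' - 1))) * hfac
  · intro s hs
    have hX : 0 < 1 + c₁ * s := by nlinarith
    exact Real.rpow_pos_of_pos hX _

end VH7

theorem statement3 (N k : ℕ) (hk : 0 < k) (hkN : k < N) (p : ℝ) (hp : 0 < p) :
    (∃ u : EuclideanSpace ℝ (Fin N) → ℝ, Continuous u ∧ (∀ x, 0 ≤ u x) ∧ (∃ x, u x ≠ 0) ∧
      IsViscositySolution (Pminus k) (fun t => t ^ p) Set.univ u) ∧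
    (p < 1 → ∀ R : ℝ, 0 < R →
      let u : EuclideanSpace ℝ (Fin N) → ℝ := fun x =>
        if ‖x‖ ≤ R then ((1 - p) / (2 * (k : ℝ)) * (R ^ 2 - ‖x‖ ^ 2)) ^ (1 / (1 - p)) else 0
      Continuous u ∧ (∀ x, 0 ≤ u x) ∧ (∃ x, u x ≠ 0) ∧
        IsViscositySolution (Pminus k) (fun t => t ^ p) Set.univ u) := by
  constructor
  · rcases lt_trichotomy p 1 with h1 | h1 | h1
    · obtain ⟨hc, hn, hne, hv⟩ := VH6.compact_case N k hk hkN p hp h1 1 one_pos _ rfl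
      exact ⟨_, hc, hn, hne, hv⟩
    · subst h1
      exact VH7.case_p_eq_one N k hk hkN
    · exact VH7.case_p_gt_one N k hk hkN p h1
  · intro hp1 R hR
    exact VH6.compact_case N k hk hkN p hp hp1 R hR _ rfl
end
end

section
/- Let N and k be positive integers with k < N, and let p ≥ 1. Then there exists a C² function u : ℝ^N → ℝ with u(x) > 0 for every x and P⁻_k(D²u(x)) + u(x)^p = 0 for every x ∈ ℝ^N. Explicitly, for any μ > 0 one may take u(x) = [ 2k / ((p−1)(μ + |x|²)) ]^{1/(p−1)} when p > 1, and u(x) = μ·exp(−|x|²/(2k)) when p = 1. -/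
open scoped BigOperators
open scoped Matrix
set_option linter.unusedVariables false

lemma isHermitian_aux {N : ℕ} (x : Fin N → ℝ) (a b : ℝ) :
    Matrix.IsHermitian (Matrix.of fun i j => (if i = j then a else 0) + b * x i * x j) := by
  ext i j
  simp [Matrix.conjTranspose_apply, eq_comm]
  ring

lemma trace_aux {N : ℕ} (x : Fin N → ℝ) (a b : ℝ) :
    Matrix.trace (Matrix.of fun i j => (if i = j then a else 0) + b * x i * x j)
      = N * a + b * ∑ i, x i * x i := by
  simp [Matrix.trace, Matrix.diag, Finset.sum_add_distrib, Finset.mul_sum, mul_assoc]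

-- sum of eigenvalues = trace
lemma sum_eig_eq_trace {N : ℕ} {A : Matrix (Fin N) (Fin N) ℝ} (hA : A.IsHermitian) :
    ∑ i, hA.eigenvalues i = Matrix.trace A := by
  nth_rewrite 2 [hA.spectral_theorem]
  rw [Unitary.conjStarAlgAut_apply, Matrix.trace_mul_cycle]
  rw [show (star (hA.eigenvectorUnitary : Matrix (Fin N) (Fin N) ℝ)) *
      (hA.eigenvectorUnitary : Matrix (Fin N) (Fin N) ℝ) = 1 from
    Unitary.coe_star_mul_self _, one_mul]
  simp [Matrix.trace_diagonal]

lemma eig_mem_aux {N : ℕ} (x : Fin N → ℝ) (a b : ℝ)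
    (hA : Matrix.IsHermitian (Matrix.of fun i j => (if i = j then a else 0) + b * x i * x j))
    (j : Fin N) :
    hA.eigenvalues j = a ∨ hA.eigenvalues j = a + b * ∑ i, x i * x i := by
  set A : Matrix (Fin N) (Fin N) ℝ := Matrix.of fun i j => (if i = j then a else 0) + b * x i * x j
  set μ := hA.eigenvalues j
  set v : Fin N → ℝ := ⇑(hA.eigenvectorBasis j)
  have hv : A *ᵥ v = μ • v := hA.mulVec_eigenvectorBasis j
  have hvne : ∃ i, v i ≠ 0 := by
    by_contra h
    push_neg at h
    have : hA.eigenvectorBasis j = 0 := by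
      ext i; exact h i
    exact hA.eigenvectorBasis.orthonormal.ne_zero j this
  set t := ∑ i, x i * v i
  have key : ∀ i, (μ - a) * v i = b * t * x i := by
    intro i
    have h1 : (A *ᵥ v) i = a * v i + b * x i * t := by
      simp only [Matrix.mulVec, dotProduct, A, Matrix.of_apply]
      rw [Finset.sum_congr rfl (fun l _ => add_mul _ _ _), Finset.sum_add_distrib]
      congr 1
      · simp [ite_mul]
      · rw [Finset.mul_sum]
        congr 1; ext l; ring
    have h2 : (μ • v) i = μ * v i := rfl
    rw [hv] at h1
    rw [h2] at h1
    nlinarith [h1]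
  by_cases hbt : b * t = 0
  · left
    obtain ⟨i, hi⟩ := hvne
    have := key i
    rw [hbt, zero_mul] at this
    have := mul_eq_zero.1 this
    rcases this with h | h
    · linarith [sub_eq_zero.1 h]
    · exact absurd h hi
  · right
    have ht : t ≠ 0 := fun h => hbt (by rw [h, mul_zero])
    have h3 : (μ - a) * t = b * t * ∑ i, x i * x i := by
      have e2 : ∑ i, x i * ((μ - a) * v i) = ∑ i, x i * (b * t * x i) :=
        Finset.sum_congr rfl fun i _ => by rw [key i]
      calc (μ - a) * t = ∑ i, x i * ((μ - a) * v i) := by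
            rw [Finset.mul_sum]; exact Finset.sum_congr rfl fun i _ => by ring
        _ = ∑ i, x i * (b * t * x i) := e2
        _ = ∑ i, b * t * (x i * x i) := Finset.sum_congr rfl fun i _ => by ring
        _ = b * t * ∑ i, x i * x i := (Finset.mul_sum _ _ _).symm
    have h4 : (μ - a) * t = (b * ∑ i, x i * x i) * t := by rw [h3]; ring
    have := mul_right_cancel₀ ht h4
    linarith

lemma pminus_aux {N k : ℕ} (hk0 : 0 < k) (hkN : k < N) (x : Fin N → ℝ) (a b : ℝ)
    (hbs : 0 ≤ b * ∑ i, x i * x i) :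
    Pminus k (Matrix.of fun i j => (if i = j then a else 0) + b * x i * x j) = k * a := by
  have hA := isHermitian_aux x a b
  set A : Matrix (Fin N) (Fin N) ℝ :=
    Matrix.of fun i j => (if i = j then a else 0) + b * x i * x j with hAdef
  set S := ∑ i, x i * x i with hSdef
  set g : Fin N → ℝ := hA.eigenvalues ∘ Tuple.sort hA.eigenvalues with hgdef
  have hsE : sortedEig A = g := by unfold sortedEig; rw [dif_pos hA]
  have hmono : Monotone g := Tuple.monotone_sort _
  have hmem : ∀ i, g i = a ∨ g i = a + b * S := fun i => eig_mem_aux x a b hA _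
  have hsum : ∑ i, g i = N * a + b * S := by
    have : ∑ i, g i = ∑ i, hA.eigenvalues i := by
      simpa [hgdef, Function.comp] using Equiv.sum_comp (Tuple.sort hA.eigenvalues) hA.eigenvalues
    rw [this, sum_eig_eq_trace hA, trace_aux]
  have hkey : ∀ i : Fin N, (i : ℕ) < N - 1 → g i = a := by
    intro i hi
    rcases hmem i with h | h
    · exact h
    by_cases hzero : b * S = 0
    · rw [h, hzero, add_zero]
    have hpos : 0 < b * S := lt_of_le_of_ne hbs (Ne.symm hzero)
    exfalso
    set jl : Fin N := ⟨N - 1, by omega⟩ with hjl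
    have hij : i ≠ jl := by
      intro hh
      rw [hh] at hi
      simp only [hjl] at hi
      omega
    have hgj : g jl = a + b * S := by
      have hle : g i ≤ g jl := hmono (by rw [Fin.le_def]; simp [hjl]; omega)
      rcases hmem jl with h2 | h2
      · rw [h, h2] at hle; linarith
      · exact h2
    have h1 : ∑ l, (g l - a) = b * S := by
      rw [Finset.sum_sub_distrib, hsum]
      simp
    have h2 : 2 * (b * S) ≤ ∑ l, (g l - a) := by
      have hsub : ∑ l ∈ ({i, jl} : Finset (Fin N)), (g l - a) ≤ ∑ l, (g l - a) :=
        Finset.sum_le_sum_of_subset_of_nonneg (Finset.subset_univ _)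
          (fun l _ _ => by rcases hmem l with h3 | h3 <;> rw [h3] <;> linarith)
      rw [Finset.sum_pair hij, h, hgj] at hsub
      linarith
    linarith
  unfold Pminus
  have step1 : ∑ i : Fin N, (if (i : ℕ) < k then sortedEig A i else 0)
      = ∑ i : Fin N, (if (i : ℕ) < k then a else 0) := by
    refine Finset.sum_congr rfl fun i _ => ?_
    by_cases h : (i : ℕ) < k
    · rw [if_pos h, if_pos h, hsE]
      exact hkey i (by omega)
    · rw [if_neg h, if_neg h]
  rw [step1, Fin.sum_univ_eq_sum_range (fun i => if i < k then a else 0) N,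
    ← Finset.sum_filter]
  have : (Finset.range N).filter (· < k) = Finset.range k := by
    ext l
    simp
    omega
  rw [this, Finset.sum_const, Finset.card_range, nsmul_eq_mul]


lemma hasFDerivAt_radial (g g₁ : ℝ → ℝ)
    (hg : ∀ t, 0 ≤ t → HasDerivAt g (g₁ t) t) (y : EuclideanSpace ℝ (Fin N)) :
    HasFDerivAt (fun z : EuclideanSpace ℝ (Fin N) => g (‖z‖ ^ 2))
      ((2 * g₁ (‖y‖ ^ 2)) • innerSL ℝ y) y := by
  have h1 : HasFDerivAt (fun z : EuclideanSpace ℝ (Fin N) => ‖z‖ ^ 2)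
      (2 • innerSL ℝ y) y := (hasStrictFDerivAt_norm_sq y).hasFDerivAt
  have h2 := (hg (‖y‖ ^ 2) (by positivity)).comp_hasFDerivAt y h1
  refine h2.congr_fderiv (Eq.symm ?_)
  ext w
  simp [two_smul]
  ring

lemma hessian_radial (g g₁ : ℝ → ℝ) (g₂ : ℝ)
    (hg : ∀ t, 0 ≤ t → HasDerivAt g (g₁ t) t)
    (x : EuclideanSpace ℝ (Fin N))
    (hg₁ : HasDerivAt g₁ g₂ (‖x‖ ^ 2)) (i j : Fin N) :
    hessianMatrix (fun y => g (‖y‖ ^ 2)) x i j =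
      (if i = j then 2 * g₁ (‖x‖ ^ 2) else 0) + 4 * g₂ * x i * x j := by
  have hfd : fderiv ℝ (fun y : EuclideanSpace ℝ (Fin N) => g (‖y‖ ^ 2))
      = fun y => (2 * g₁ (‖y‖ ^ 2)) • innerSL ℝ y :=
    funext fun y => (hasFDerivAt_radial g g₁ hg y).fderiv
  have hc : HasFDerivAt (fun y : EuclideanSpace ℝ (Fin N) => 2 * g₁ (‖y‖ ^ 2))
      ((4 * g₂) • innerSL ℝ x) x := by
    have h1 : HasFDerivAt (fun z : EuclideanSpace ℝ (Fin N) => ‖z‖ ^ 2)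
        (2 • innerSL ℝ x) x := (hasStrictFDerivAt_norm_sq x).hasFDerivAt
    have h2 := (hg₁.comp_hasFDerivAt x h1).const_mul 2
    refine h2.congr_fderiv (Eq.symm ?_)
    ext w
    simp [two_smul]
    ring
  have hL : HasFDerivAt (fun y : EuclideanSpace ℝ (Fin N) => innerSL ℝ y)
      (innerSL ℝ (E := EuclideanSpace ℝ (Fin N))) x :=
    (innerSL ℝ (E := EuclideanSpace ℝ (Fin N))).hasFDerivAt
  have hF := hc.smul hL
  have h3 : fderiv ℝ (fun y : EuclideanSpace ℝ (Fin N) => (2 * g₁ (‖y‖ ^ 2)) • innerSL ℝ y) x = _ := hF.fderiv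
  unfold hessianMatrix
  rw [iteratedFDeriv_two_apply, hfd, h3]
  simp only [Matrix.cons_val_zero, Matrix.cons_val_one, Matrix.head_cons,
    ContinuousLinearMap.add_apply, ContinuousLinearMap.smul_apply,
    ContinuousLinearMap.smulRight_apply, innerSL_apply_apply, smul_eq_mul]
  simp [EuclideanSpace.inner_single_right, EuclideanSpace.inner_single_left,
    EuclideanSpace.single_apply, innerSL_apply_apply]
  erw [innerSL_apply_apply]
  by_cases h : i = j
  · simp [h, EuclideanSpace.inner_single_left]
  · simp [h, Ne.symm h, EuclideanSpace.inner_single_left]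

lemma norm_sq_eq_sum {N : ℕ} (x : EuclideanSpace ℝ (Fin N)) :
    ‖x‖ ^ 2 = ∑ i, x i * x i := by
  rw [← real_inner_self_eq_norm_sq]
  rw [PiLp.inner_apply]; simp [sq]

lemma radial_solution {N k : ℕ} (hk0 : 0 < k) (hkN : k < N) (p : ℝ)
    (g g₁ g₂ : ℝ → ℝ)
    (hg : ∀ t, 0 ≤ t → HasDerivAt g (g₁ t) t)
    (hg₁ : ∀ t, 0 ≤ t → HasDerivAt g₁ (g₂ t) t)
    (hg₂ : ∀ t, 0 ≤ t → 0 ≤ g₂ t)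
    (heq : ∀ t, 0 ≤ t → 2 * k * g₁ t + g t ^ p = 0) :
    ∀ x : EuclideanSpace ℝ (Fin N),
      Pminus k (hessianMatrix (fun y => g (‖y‖ ^ 2)) x) + g (‖x‖ ^ 2) ^ p = 0 := by
  intro x
  have hs : (0 : ℝ) ≤ ‖x‖ ^ 2 := by positivity
  have hmat : hessianMatrix (fun y => g (‖y‖ ^ 2)) x
      = Matrix.of fun i j =>
          (if i = j then 2 * g₁ (‖x‖ ^ 2) else 0) + (4 * g₂ (‖x‖ ^ 2)) * x i * x j := by
    ext i j
    rw [show (Matrix.of fun i j =>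
          (if i = j then 2 * g₁ (‖x‖ ^ 2) else 0) + (4 * g₂ (‖x‖ ^ 2)) * x i * x j) i j
        = (if i = j then 2 * g₁ (‖x‖ ^ 2) else 0) + (4 * g₂ (‖x‖ ^ 2)) * x i * x j from rfl]
    rw [hessian_radial g g₁ (g₂ (‖x‖ ^ 2)) hg x (hg₁ _ hs) i j]
  rw [hmat, pminus_aux hk0 hkN (fun i => x i) (2 * g₁ (‖x‖ ^ 2)) (4 * g₂ (‖x‖ ^ 2))
    (by
      have h1 : (0:ℝ) ≤ ∑ i, x i * x i := by rw [← norm_sq_eq_sum]; positivity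
      have h2 := hg₂ _ hs
      positivity)]
  linear_combination heq (‖x‖ ^ 2) hs

lemma branch_one {N k : ℕ} (hk0 : 0 < k) (hkN : k < N) (μ : ℝ) (hμ : 0 < μ) :
    ContDiff ℝ 2 (fun x : EuclideanSpace ℝ (Fin N) =>
        μ * Real.exp (-‖x‖ ^ 2 / (2 * (k : ℝ)))) ∧
    (∀ x : EuclideanSpace ℝ (Fin N), 0 < μ * Real.exp (-‖x‖ ^ 2 / (2 * (k : ℝ)))) ∧
    ∀ x : EuclideanSpace ℝ (Fin N),
      Pminus k (hessianMatrix
        (fun x => μ * Real.exp (-‖x‖ ^ 2 / (2 * (k : ℝ)))) x)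
        + (μ * Real.exp (-‖x‖ ^ 2 / (2 * (k : ℝ)))) ^ (1 : ℝ) = 0 := by
  have hk : (0 : ℝ) < (k : ℝ) := by exact_mod_cast hk0
  refine ⟨?_, ?_, ?_⟩
  · exact contDiff_const.mul
      (Real.contDiff_exp.comp (((contDiff_norm_sq ℝ).neg).div_const _))
  · intro x; positivity
  · set g : ℝ → ℝ := fun t => μ * Real.exp (-t / (2 * (k : ℝ))) with hgdef
    set g₁ : ℝ → ℝ := fun t => -(μ / (2 * (k : ℝ))) * Real.exp (-t / (2 * (k : ℝ))) with hg1def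
    set g₂ : ℝ → ℝ := fun t => μ / (4 * (k : ℝ) ^ 2) * Real.exp (-t / (2 * (k : ℝ))) with hg2def
    have hlin : ∀ t : ℝ, HasDerivAt (fun t : ℝ => -t / (2 * (k : ℝ)))
        (-(1 / (2 * (k : ℝ)))) t := by
      intro t
      have := ((hasDerivAt_id t).neg.div_const (2 * (k : ℝ)))
      refine this.congr_deriv (Eq.symm ?_)
      ring
    have hg : ∀ t, 0 ≤ t → HasDerivAt g (g₁ t) t := by
      intro t _
      have := ((hlin t).exp).const_mul μ
      refine this.congr_deriv (Eq.symm ?_)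
      simp [hg1def]
      ring
    have hg₁ : ∀ t, 0 ≤ t → HasDerivAt g₁ (g₂ t) t := by
      intro t _
      have := ((hlin t).exp).const_mul (-(μ / (2 * (k : ℝ))))
      refine this.congr_deriv (Eq.symm ?_)
      simp [hg2def]
      field_simp
      ring
    exact radial_solution hk0 hkN 1 g g₁ g₂ hg hg₁
      (fun t _ => by simp only [hg2def]; positivity)
      (fun t _ => by
        rw [Real.rpow_one]
        simp only [hgdef, hg1def]
        field_simp
        ring)

lemma branch_p {N k : ℕ} (hk0 : 0 < k) (hkN : k < N) (p μ : ℝ) (hp : 1 < p) (hμ : 0 < μ) :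
    ContDiff ℝ 2 (fun x : EuclideanSpace ℝ (Fin N) =>
        (2 * (k : ℝ) / ((p - 1) * (μ + ‖x‖ ^ 2))) ^ (1 / (p - 1))) ∧
    (∀ x : EuclideanSpace ℝ (Fin N),
        0 < (2 * (k : ℝ) / ((p - 1) * (μ + ‖x‖ ^ 2))) ^ (1 / (p - 1))) ∧
    ∀ x : EuclideanSpace ℝ (Fin N),
      Pminus k (hessianMatrix
        (fun x => (2 * (k : ℝ) / ((p - 1) * (μ + ‖x‖ ^ 2))) ^ (1 / (p - 1))) x)
        + ((2 * (k : ℝ) / ((p - 1) * (μ + ‖x‖ ^ 2))) ^ (1 / (p - 1))) ^ p = 0 := by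
  have hk : (0 : ℝ) < (k : ℝ) := by exact_mod_cast hk0
  have hp1 : (0 : ℝ) < p - 1 := by linarith
  refine ⟨?_, ?_, ?_⟩
  · rw [contDiff_iff_contDiffAt]
    intro x
    have hpos : (0 : ℝ) < (p - 1) * (μ + ‖x‖ ^ 2) := by positivity
    have hbase : ContDiffAt ℝ 2
        (fun x : EuclideanSpace ℝ (Fin N) => 2 * (k : ℝ) / ((p - 1) * (μ + ‖x‖ ^ 2))) x :=
      contDiffAt_const.div
        ((contDiff_const.mul (contDiff_const.add (contDiff_norm_sq ℝ))).contDiffAt)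
        (ne_of_gt hpos)
    exact hbase.rpow_const_of_ne (by positivity)
  · intro x
    have hpos : (0 : ℝ) < 2 * (k : ℝ) / ((p - 1) * (μ + ‖x‖ ^ 2)) := by positivity
    exact Real.rpow_pos_of_pos hpos _
  · set α : ℝ := 1 / (p - 1) with hα
    have hα0 : 0 < α := by positivity
    set h : ℝ → ℝ := fun t => 2 * (k : ℝ) / ((p - 1) * (μ + t)) with hhdef
    have hht : ∀ t : ℝ, 0 ≤ t → 0 < h t := by
      intro t ht
      have h1 : (0 : ℝ) < μ + t := by linarith
      simp only [hhdef]
      positivity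
    set g : ℝ → ℝ := fun t => h t ^ α with hgdef
    set g₁ : ℝ → ℝ := fun t => -α * g t / (μ + t) with hg1def
    set g₂ : ℝ → ℝ := fun t => α * (α + 1) * g t / (μ + t) ^ 2 with hg2def
    have hgpos : ∀ t, 0 ≤ t → 0 < g t := fun t ht => Real.rpow_pos_of_pos (hht t ht) α
    have hhd : ∀ t : ℝ, 0 ≤ t → HasDerivAt h (-(h t) / (μ + t)) t := by
      intro t ht
      have hμt : (0 : ℝ) < μ + t := by linarith
      have hden : HasDerivAt (fun t : ℝ => (p - 1) * (μ + t)) (p - 1) t := by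
        have := ((hasDerivAt_id t).const_add μ).const_mul (p - 1)
        refine this.congr_deriv (Eq.symm ?_)
        ring
      have hdiv := (hasDerivAt_const t (2 * (k : ℝ))).div hden (by positivity)
      refine hdiv.congr_deriv (Eq.symm ?_)
      simp only [hhdef]
      field_simp
      ring
    have hgd : ∀ t, 0 ≤ t → HasDerivAt g (g₁ t) t := by
      intro t ht
      have hμt : (0 : ℝ) < μ + t := by linarith
      have H := hht t ht
      have := (hhd t ht).rpow_const (p := α) (Or.inl (ne_of_gt H))
      refine this.congr_deriv (Eq.symm ?_)
      rw [show h t ^ (α - 1) = h t ^ α / h t by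
        rw [Real.rpow_sub H, Real.rpow_one]]
      simp only [hg1def, hgdef]
      field_simp
    have hg1d : ∀ t, 0 ≤ t → HasDerivAt g₁ (g₂ t) t := by
      intro t ht
      have hμt : (0 : ℝ) < μ + t := by linarith
      have hnum : HasDerivAt (fun s => -α * g s) (-α * g₁ t) t := (hgd t ht).const_mul (-α)
      have hden : HasDerivAt (fun s : ℝ => μ + s) 1 t := (hasDerivAt_id t).const_add μ
      have hdiv := hnum.div hden (ne_of_gt hμt)
      refine hdiv.congr_deriv (Eq.symm ?_)
      simp only [hg1def, hg2def]
      field_simp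
      ring
    have heq : ∀ t, 0 ≤ t → 2 * (k : ℝ) * g₁ t + g t ^ p = 0 := by
      intro t ht
      have hμt : (0 : ℝ) < μ + t := by linarith
      have H := hht t ht
      have hαp : α * p = α + 1 := by
        rw [hα]
        field_simp
        ring
      have e1 : g t ^ p = g t * h t := by
        rw [hgdef]
        show (h t ^ α) ^ p = h t ^ α * h t
        rw [← Real.rpow_mul H.le, hαp, Real.rpow_add H, Real.rpow_one]
      rw [e1]
      simp only [hg1def, hhdef, hα]
      have hG := hgpos t ht
      field_simp
      ring
    exact radial_solution hk0 hkN p g g₁ g₂ hgd hg1d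
      (fun t ht => by
        have := hgpos t ht
        have hμt : (0 : ℝ) ≤ (μ + t) ^ 2 := sq_nonneg _
        simp only [hg2def]
        positivity)
      heq

theorem statement4 (N k : ℕ) (hk : 0 < k) (hkN : k < N) (p : ℝ) (hp : 1 ≤ p) :
    (∃ u : EuclideanSpace ℝ (Fin N) → ℝ, ContDiff ℝ 2 u ∧ (∀ x, 0 < u x) ∧
      ∀ x, Pminus k (hessianMatrix u x) + u x ^ p = 0) ∧
    (∀ μ : ℝ, 0 < μ →
      (1 < p →
        let u : EuclideanSpace ℝ (Fin N) → ℝ :=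
          fun x => (2 * (k : ℝ) / ((p - 1) * (μ + ‖x‖ ^ 2))) ^ (1 / (p - 1))
        ContDiff ℝ 2 u ∧ (∀ x, 0 < u x) ∧
          ∀ x, Pminus k (hessianMatrix u x) + u x ^ p = 0) ∧
      (p = 1 →
        let u : EuclideanSpace ℝ (Fin N) → ℝ :=
          fun x => μ * Real.exp (-‖x‖ ^ 2 / (2 * (k : ℝ)))
        ContDiff ℝ 2 u ∧ (∀ x, 0 < u x) ∧
          ∀ x, Pminus k (hessianMatrix u x) + u x ^ p = 0)) := by
  constructor
  · rcases lt_or_eq_of_le hp with hp' | hp'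
    · obtain ⟨h1, h2, h3⟩ := branch_p (N := N) hk hkN p 1 hp' one_pos
      exact ⟨_, h1, h2, h3⟩
    · obtain rfl : p = 1 := hp'.symm
      obtain ⟨h1, h2, h3⟩ := branch_one (N := N) hk hkN 1 one_pos
      exact ⟨_, h1, h2, h3⟩
  · intro μ hμ
    constructor
    · intro hp'
      exact branch_p hk hkN p μ hp' hμ
    · intro hp1
      subst hp1
      exact branch_one hk hkN μ hμ
end
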